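/- arXiv:0801.2844 — 4 statements merged into one kernel-verified Lean document; each statement's English description precedes it below -/
import Mathlib

section
/- For every irrational real number x such that the Brjuno series B(x) = Σ_{k=0}^∞ (log a_{k+1})/q_k converges, the classical Brjuno series B_cl(x) = Σ_{k=0}^∞ (log q_{k+1})/q_k also converges, and 0 ≤ B_cl(x) − B(x) ≤ Σ_{k=0}^∞ log(2F_k)/F_k < +∞. -/
open scoped ENNReal Topology

noncomputable def gaussIter (x : ℝ) : ℕ → ℝ
  | 0 => Int.fract x
  | n + 1 => Int.fract (gaussIter x n)⁻¹

noncomputable def pquot (x : ℝ) : ℕ → ℤ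
  | 0 => ⌊x⌋
  | n + 1 => ⌊(gaussIter x n)⁻¹⌋

noncomputable def qden (x : ℝ) : ℕ → ℤ
  | 0 => 1
  | 1 => pquot x 1
  | n + 2 => pquot x (n + 2) * qden x (n + 1) + qden x n

noncomputable def pnum (x : ℝ) : ℕ → ℤ
  | 0 => pquot x 0
  | 1 => pquot x 1 * pquot x 0 + 1
  | n + 2 => pquot x (n + 2) * pnum x (n + 1) + pnum x n

noncomputable def brjunoTerm (x : ℝ) (k : ℕ) : ℝ :=
  Real.log (pquot x (k + 1)) / (qden x k : ℝ)

open Classical in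
noncomputable def brjuno (x : ℝ) : ℝ≥0∞ :=
  if Irrational x then ∑' k, ENNReal.ofReal (brjunoTerm x k) else ⊤

noncomputable def brjunoTailE (x : ℝ) (n : ℕ) : ℝ≥0∞ :=
  ∑' k, ENNReal.ofReal (brjunoTerm x (n + k))

noncomputable def cfLen (x : ℝ) : ℕ := sInf {n | gaussIter x n = 0}

noncomputable def brjunoFinite (x : ℝ) : ℝ :=
  ∑ k ∈ Finset.range (cfLen x), Real.log (pquot x (k + 1)) / (qden x k : ℝ)

def brjunoSuper (t : ℝ) : Set ℝ := {x | ENNReal.ofReal t < brjuno x}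

def IsCompOf (A : Set ℝ) (a b : ℝ) : Prop := ∃ x ∈ A, connectedComponentIn A x = Set.Ioo a b

def diamond (κ a b : ℝ) : Set ℂ :=
  {z : ℂ | a < z.re ∧ z.re < b ∧ |z.im| ≤ κ * min (z.re - a) (b - z.re)}

noncomputable def CMset (κ M : ℝ) : Set ℂ :=
  (fun ξ : ℂ => Complex.exp (2 * Real.pi * Complex.I * ξ)) ''
    (⋃ (a : ℝ) (b : ℝ) (_ : IsCompOf (brjunoSuper M) a b), diamond κ a b)ᶜ ∪ {0}

namespace S0
open Real

lemma gauss_prop (x : ℝ) (hx : Irrational x) :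
    ∀ n, Irrational (gaussIter x n) ∧ 0 < gaussIter x n ∧ gaussIter x n < 1 := by
  intro n
  induction n with
  | zero =>
    have h1 : Irrational (Int.fract x) := by
      rw [← Int.self_sub_floor]; exact hx.sub_intCast ⌊x⌋
    refine ⟨h1, ?_, Int.fract_lt_one x⟩
    rcases (Int.fract_nonneg x).lt_or_eq with h | h
    · exact h
    · exact absurd h.symm (by simpa using h1.ne_int 0)
  | succ n ih =>
    obtain ⟨hirr, h0, h1⟩ := ih
    have hinv : Irrational (gaussIter x n)⁻¹ := hirr.inv
    have h1' : Irrational (gaussIter x (n+1)) := by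
      show Irrational (Int.fract (gaussIter x n)⁻¹)
      rw [← Int.self_sub_floor]; exact hinv.sub_intCast _
    refine ⟨h1', ?_, by simpa [gaussIter] using Int.fract_lt_one (gaussIter x n)⁻¹⟩
    rcases (Int.fract_nonneg (gaussIter x n)⁻¹).lt_or_eq with h | h
    · simpa [gaussIter] using h
    · exact absurd h.symm (by simpa [gaussIter] using h1'.ne_int 0)

lemma pquot_ge (x : ℝ) (hx : Irrational x) (n : ℕ) : 1 ≤ pquot x (n + 1) := by
  obtain ⟨_, h0, h1⟩ := gauss_prop x hx n
  have : (1 : ℝ) ≤ (gaussIter x n)⁻¹ := le_of_lt ((one_lt_inv₀ h0).mpr h1)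
  exact Int.le_floor.mpr (by exact_mod_cast this)

lemma qden_pos_mono (x : ℝ) (hx : Irrational x) :
    ∀ n, 1 ≤ qden x n ∧ qden x n ≤ qden x (n + 1) := by
  intro n
  induction n with
  | zero =>
    refine ⟨le_refl _, ?_⟩
    simpa [qden] using pquot_ge x hx 0
  | succ n ih =>
    obtain ⟨h1, h2⟩ := ih
    have hq1 : 1 ≤ qden x (n+1) := le_trans h1 h2
    have ha : 1 ≤ pquot x (n+2) := pquot_ge x hx (n+1)
    constructor
    · exact hq1
    · show qden x (n+1) ≤ pquot x (n+2) * qden x (n+1) + qden x n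
      nlinarith

lemma fib_le_qden (x : ℝ) (hx : Irrational x) :
    ∀ n, (Nat.fib (n+1) : ℤ) ≤ qden x n ∧ (Nat.fib (n+2) : ℤ) ≤ qden x (n+1) := by
  intro n
  induction n with
  | zero =>
    constructor
    · simp [qden]
    · simpa [qden] using pquot_ge x hx 0
  | succ n ih =>
    obtain ⟨h1, h2⟩ := ih
    refine ⟨h2, ?_⟩
    have ha : 1 ≤ pquot x (n+2) := pquot_ge x hx (n+1)
    have hq1 : 1 ≤ qden x (n+1) := (qden_pos_mono x hx (n+1)).1
    show (Nat.fib (n+3) : ℤ) ≤ pquot x (n+2) * qden x (n+1) + qden x n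
    have hfib : (Nat.fib (n+3) : ℤ) = (Nat.fib (n+2) : ℤ) + (Nat.fib (n+1) : ℤ) := by
      push_cast [Nat.fib_add_two]; ring
    nlinarith

lemma qden_le (x : ℝ) (hx : Irrational x) (k : ℕ) :
    qden x (k + 1) ≤ 2 * pquot x (k + 1) * qden x k := by
  cases k with
  | zero =>
    have := pquot_ge x hx 0
    show pquot x 1 ≤ 2 * pquot x 1 * 1
    nlinarith
  | succ n =>
    have ha : 1 ≤ pquot x (n+2) := pquot_ge x hx (n+1)
    have h1 := (qden_pos_mono x hx n).1
    have h2 := (qden_pos_mono x hx n).2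
    have hq1 : 1 ≤ qden x (n+1) := le_trans h1 h2
    show pquot x (n+2) * qden x (n+1) + qden x n ≤ 2 * pquot x (n+2) * qden x (n+1)
    nlinarith

lemma pquot_le_qden (x : ℝ) (hx : Irrational x) (k : ℕ) :
    pquot x (k + 1) ≤ qden x (k + 1) := by
  cases k with
  | zero => exact le_refl _
  | succ n =>
    have ha : 1 ≤ pquot x (n+2) := pquot_ge x hx (n+1)
    have h1 := (qden_pos_mono x hx n).1
    have hq1 : 1 ≤ qden x (n+1) := (qden_pos_mono x hx (n+1)).1
    show pquot x (n+2) ≤ pquot x (n+2) * qden x (n+1) + qden x n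
    nlinarith

lemma fib_le_two_pow' : ∀ n : ℕ, Nat.fib (n+1) ≤ 2^n ∧ Nat.fib (n+2) ≤ 2^(n+1) := by
  intro n
  induction n with
  | zero => simp
  | succ n ih =>
    obtain ⟨h1, h2⟩ := ih
    refine ⟨h2, ?_⟩
    rw [Nat.fib_add_two]
    have : Nat.fib (n+1) + Nat.fib (n+2) ≤ 2^n + 2^(n+1) := Nat.add_le_add h1 h2
    calc Nat.fib (n+1) + Nat.fib (n+1+1) ≤ 2^n + 2^(n+1) := this
    _ ≤ 2^(n+2) := by ring_nf; omega

lemma two_pow_le_fib_sq : ∀ n : ℕ, 2^n ≤ 2 * (Nat.fib (n+1))^2 ∧ 2^(n+1) ≤ 2 * (Nat.fib (n+2))^2 := by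
  intro n
  induction n with
  | zero => simp
  | succ n ih =>
    obtain ⟨h1, h2⟩ := ih
    refine ⟨h2, ?_⟩
    have hf : 2 * Nat.fib (n+1) ≤ Nat.fib (n+3) := by
      rw [Nat.fib_add_two]
      have := Nat.fib_le_fib_succ (n := n+1)
      omega
    have : 4 * (Nat.fib (n+1))^2 ≤ (Nat.fib (n+3))^2 := by nlinarith
    calc 2^(n+2) = 4 * 2^n := by ring
    _ ≤ 4 * (2 * (Nat.fib (n+1))^2) := by omega
    _ ≤ 2 * (Nat.fib (n+3))^2 := by nlinarith

lemma g_anti {m n : ℝ} (hm : 2 ≤ m) (hmn : m ≤ n) :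
    log (2*n) / n ≤ log (2*m) / m := by
  have he : Real.exp 1 ≤ 2*m := by
    have := Real.exp_one_lt_d9
    linarith
  have hmem1 : (2*m) ∈ {x : ℝ | Real.exp 1 ≤ x} := he
  have hmem2 : (2*n) ∈ {x : ℝ | Real.exp 1 ≤ x} := by
    simp only [Set.mem_setOf_eq]; linarith
  have h : log (2*n) / (2*n) ≤ log (2*m) / (2*m) :=
    Real.log_div_self_antitoneOn hmem1 hmem2 (by linarith)
  have hm0 : (0:ℝ) < m := by linarith
  have hn0 : (0:ℝ) < n := by linarith
  rw [div_le_div_iff₀ hn0 hm0]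
  rw [div_le_div_iff₀ (by linarith) (by linarith)] at h
  nlinarith

lemma g_anti_int {m n : ℤ} (hm : 1 ≤ m) (hmn : m ≤ n) :
    log (2*(n:ℝ)) / (n:ℝ) ≤ log (2*(m:ℝ)) / (m:ℝ) := by
  rcases eq_or_lt_of_le hm with h1 | h2
  · have hm1 : (m:ℝ) = 1 := by exact_mod_cast h1.symm
    rw [hm1]
    simp only [mul_one, div_one]
    rcases eq_or_lt_of_le hmn with hn1 | hn2
    · rw [← hn1, hm1]; simp
    · have hn2' : (2:ℤ) ≤ n := by omega
      have hn2r : (2:ℝ) ≤ (n:ℝ) := by exact_mod_cast hn2'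
      calc log (2*(n:ℝ)) / (n:ℝ) ≤ log (2*2) / 2 := g_anti le_rfl hn2r
      _ = log 2 := by
          rw [show (2*2:ℝ) = 2^2 by norm_num, Real.log_pow]
          push_cast; ring
  · have hm2 : (2:ℝ) ≤ (m:ℝ) := by exact_mod_cast h2
    exact g_anti hm2 (by exact_mod_cast hmn)

end S0

/-- convergence of the classical Brjuno series and comparison with
the Brjuno series, with the Fibonacci bound. -/
theorem statement0 (x : ℝ) (hx : Irrational x)
    (hB : Summable (fun k => Real.log (pquot x (k + 1) : ℝ) / (qden x k : ℝ))) :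
    Summable (fun k => Real.log (qden x (k + 1) : ℝ) / (qden x k : ℝ)) ∧
    Summable (fun k => Real.log (2 * (Nat.fib (k + 1) : ℝ)) / (Nat.fib (k + 1) : ℝ)) ∧
    0 ≤ (∑' k, Real.log (qden x (k + 1) : ℝ) / (qden x k : ℝ)) -
        (∑' k, Real.log (pquot x (k + 1) : ℝ) / (qden x k : ℝ)) ∧
    (∑' k, Real.log (qden x (k + 1) : ℝ) / (qden x k : ℝ)) -
        (∑' k, Real.log (pquot x (k + 1) : ℝ) / (qden x k : ℝ)) ≤
      ∑' k, Real.log (2 * (Nat.fib (k + 1) : ℝ)) / (Nat.fib (k + 1) : ℝ) := by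
  classical
  set b : ℕ → ℝ := fun k => Real.log (pquot x (k + 1) : ℝ) / (qden x k : ℝ) with hb_def
  set c : ℕ → ℝ := fun k => Real.log (qden x (k + 1) : ℝ) / (qden x k : ℝ) with hc_def
  set d : ℕ → ℝ := fun k => Real.log (2 * (Nat.fib (k + 1) : ℝ)) / (Nat.fib (k + 1) : ℝ) with hd_def
  -- basic real facts
  have hF1 : ∀ k : ℕ, (1:ℝ) ≤ (Nat.fib (k+1) : ℝ) := by
    intro k
    exact_mod_cast Nat.one_le_iff_ne_zero.mpr (Nat.fib_pos.mpr (Nat.succ_pos k)).ne'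
  -- difference bounds
  have hdiff : ∀ k, 0 ≤ c k - b k ∧ c k - b k ≤ d k := by
    intro k
    have hA : (1:ℝ) ≤ (pquot x (k+1) : ℝ) := by exact_mod_cast S0.pquot_ge x hx k
    have hQ : (1:ℝ) ≤ (qden x k : ℝ) := by exact_mod_cast (S0.qden_pos_mono x hx k).1
    have hQ0 : (0:ℝ) < (qden x k : ℝ) := lt_of_lt_of_le one_pos hQ
    have hAQ' : (pquot x (k+1) : ℝ) ≤ (qden x (k+1) : ℝ) := by
      exact_mod_cast S0.pquot_le_qden x hx k
    have hQ'2 : (qden x (k+1) : ℝ) ≤ (pquot x (k+1) : ℝ) * (2 * (qden x k : ℝ)) := by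
      have := S0.qden_le x hx k
      have h' : ((qden x (k+1) : ℤ) : ℝ) ≤ ((2 * pquot x (k+1) * qden x k : ℤ) : ℝ) := by
        exact_mod_cast this
      push_cast at h'
      linarith
    have hlogAB : Real.log (pquot x (k+1) : ℝ) ≤ Real.log (qden x (k+1) : ℝ) :=
      Real.log_le_log (by linarith) hAQ'
    have hcb : c k - b k = (Real.log (qden x (k+1) : ℝ) - Real.log (pquot x (k+1) : ℝ)) / (qden x k : ℝ) := by
      simp only [hb_def, hc_def]
      field_simp
    constructor
    · rw [hcb]
      exact div_nonneg (by linarith) (le_of_lt hQ0)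
    · rw [hcb]
      have hupper : Real.log (qden x (k+1) : ℝ) - Real.log (pquot x (k+1) : ℝ)
          ≤ Real.log (2 * (qden x k : ℝ)) := by
        have h1 : Real.log (qden x (k+1) : ℝ) ≤
            Real.log ((pquot x (k+1) : ℝ) * (2 * (qden x k : ℝ))) :=
          Real.log_le_log (by linarith) hQ'2
        rw [Real.log_mul (by linarith) (by linarith)] at h1
        linarith
      have hstep1 : (Real.log (qden x (k+1) : ℝ) - Real.log (pquot x (k+1) : ℝ)) / (qden x k : ℝ)
          ≤ Real.log (2 * (qden x k : ℝ)) / (qden x k : ℝ) := by gcongr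
      have hstep2 : Real.log (2 * (qden x k : ℝ)) / (qden x k : ℝ) ≤ d k := by
        have hfq : ((Nat.fib (k+1) : ℤ)) ≤ qden x k := (S0.fib_le_qden x hx k).1
        have := S0.g_anti_int (m := (Nat.fib (k+1) : ℤ)) (n := qden x k)
          (by exact_mod_cast Nat.one_le_iff_ne_zero.mpr (Nat.fib_pos.mpr (Nat.succ_pos k)).ne')
          hfq
        simp only [hd_def]
        push_cast at this ⊢
        exact this
      exact hstep1.trans hstep2
  -- majorant
  set r : ℝ := (Real.sqrt 2)⁻¹ with hr_def
  have hsqrt2 : (1:ℝ) < Real.sqrt 2 := by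
    rw [show (1:ℝ) = Real.sqrt 1 by simp]
    exact Real.sqrt_lt_sqrt (by norm_num) (by norm_num)
  have hs2pos : (0:ℝ) < Real.sqrt 2 := by linarith
  have hr_pos : 0 < r := inv_pos.mpr hs2pos
  have hr_lt : r < 1 := inv_lt_one_of_one_lt₀ hsqrt2
  set M : ℕ → ℝ := fun k => (Real.sqrt 2 * Real.log 2) * (((k:ℝ)+1) * r^k) with hM_def
  have hdM : ∀ k, d k ≤ M k := by
    intro k
    have hF := hF1 k
    have hF0 : (0:ℝ) < (Nat.fib (k+1) : ℝ) := lt_of_lt_of_le one_pos hF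
    have hlog_le : Real.log (2 * (Nat.fib (k+1) : ℝ)) ≤ ((k:ℝ)+1) * Real.log 2 := by
      have hfib2 : (Nat.fib (k+1) : ℝ) ≤ (2:ℝ)^k := by
        exact_mod_cast (S0.fib_le_two_pow' k).1
      have h2F : 2 * (Nat.fib (k+1) : ℝ) ≤ (2:ℝ)^(k+1) := by
        rw [pow_succ]
        nlinarith
      calc Real.log (2 * (Nat.fib (k+1) : ℝ)) ≤ Real.log ((2:ℝ)^(k+1)) :=
            Real.log_le_log (by linarith) h2F
      _ = ((k:ℝ)+1) * Real.log 2 := by rw [Real.log_pow]; push_cast; ring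
    have hkey : (Real.sqrt 2)^k ≤ Real.sqrt 2 * (Nat.fib (k+1) : ℝ) := by
      rw [← pow_le_pow_iff_left₀ (pow_nonneg (le_of_lt hs2pos) k)
        (by positivity) (two_ne_zero)]
      have e1 : ((Real.sqrt 2)^k)^2 = (2:ℝ)^k := by
        rw [← pow_mul, mul_comm, pow_mul, Real.sq_sqrt (by norm_num : (0:ℝ) ≤ 2)]
      have e2 : (Real.sqrt 2 * (Nat.fib (k+1) : ℝ))^2 = 2 * (Nat.fib (k+1) : ℝ)^2 := by
        rw [mul_pow, Real.sq_sqrt (by norm_num : (0:ℝ) ≤ 2)]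
      rw [e1, e2]
      exact_mod_cast (S0.two_pow_le_fib_sq k).1
    have hinv : ((Nat.fib (k+1) : ℝ))⁻¹ ≤ Real.sqrt 2 * r^k := by
      have hpow : (0:ℝ) < (Real.sqrt 2)^k := by positivity
      have h1 : 1 / (Nat.fib (k+1) : ℝ) ≤ Real.sqrt 2 / (Real.sqrt 2)^k := by
        rw [div_le_div_iff₀ hF0 hpow]
        nlinarith [hkey]
      calc ((Nat.fib (k+1) : ℝ))⁻¹ = 1 / (Nat.fib (k+1) : ℝ) := (one_div _).symm
      _ ≤ Real.sqrt 2 / (Real.sqrt 2)^k := h1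
      _ = Real.sqrt 2 * r^k := by rw [hr_def, inv_pow, div_eq_mul_inv]
    have hlog2 : (0:ℝ) ≤ Real.log 2 := Real.log_nonneg one_le_two
    have : d k = Real.log (2 * (Nat.fib (k+1) : ℝ)) * ((Nat.fib (k+1) : ℝ))⁻¹ := by
      simp only [hd_def, div_eq_mul_inv]
    rw [this]
    calc Real.log (2 * (Nat.fib (k+1) : ℝ)) * ((Nat.fib (k+1) : ℝ))⁻¹
        ≤ (((k:ℝ)+1) * Real.log 2) * (Real.sqrt 2 * r^k) := by
          apply mul_le_mul hlog_le hinv (by positivity) (by positivity)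
    _ = M k := by simp only [hM_def]; ring
  -- summability of the majorant
  have hr_norm : ‖r‖ < 1 := by
    rw [Real.norm_eq_abs, abs_of_pos hr_pos]; exact hr_lt
  have hM_sum : Summable M := by
    have h1 : Summable (fun k : ℕ => (k:ℝ)^1 * r^k) :=
      summable_pow_mul_geometric_of_norm_lt_one 1 hr_norm
    have h2 : Summable (fun k : ℕ => r^k) := summable_geometric_of_norm_lt_one hr_norm
    have h3 : Summable (fun k : ℕ => ((k:ℝ)+1) * r^k) := by
      have := h1.add h2
      apply this.congr
      intro k
      simp only [pow_one]
      ring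
    exact h3.mul_left _
  -- summability of d
  have hd_nonneg : ∀ k, 0 ≤ d k := by
    intro k
    have hF := hF1 k
    apply div_nonneg (Real.log_nonneg (by linarith)) (by linarith)
  have hd_sum : Summable d := Summable.of_nonneg_of_le hd_nonneg hdM hM_sum
  -- summability of e and c
  have he_sum : Summable (fun k => c k - b k) :=
    Summable.of_nonneg_of_le (fun k => (hdiff k).1) (fun k => (hdiff k).2) hd_sum
  have hc_sum : Summable c := by
    have := hB.add he_sum
    apply this.congr
    intro k
    show b k + (c k - b k) = c k
    ring
  refine ⟨hc_sum, hd_sum, ?_, ?_⟩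
  · have htsub : ∑' k, (c k - b k) = (∑' k, c k) - (∑' k, b k) :=
      (hc_sum.hasSum.sub hB.hasSum).tsum_eq
    rw [← htsub]
    exact tsum_nonneg (fun k => (hdiff k).1)
  · have htsub : ∑' k, (c k - b k) = (∑' k, c k) - (∑' k, b k) :=
      (hc_sum.hasSum.sub hB.hasSum).tsum_eq
    rw [← htsub]
    exact Summable.tsum_le_tsum (fun k => (hdiff k).2) he_sum hd_sum
end

section
/- Let x be an irrational real number with B(x) < +∞. Then for every ε > 0 there exist irrational numbers α⁻ and α⁺ such that: (i) α⁻ < x < α⁺ and α⁺ − α⁻ < ε; (ii) |B(α⁻) − B(x)| < ε and |B(α⁺) − B(x)| < ε. -/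
open scoped ENNReal Topology

section BrjunoAux

set_option maxHeartbeats 1000000

open Real

noncomputable def qq (x : ℝ) : ℕ → ℤ
  | 0 => 0
  | n + 1 => qden x n

noncomputable def pp (x : ℝ) : ℕ → ℤ
  | 0 => 1
  | n + 1 => pnum x n

lemma qq_rec (x : ℝ) (n : ℕ) :
    qq x (n + 2) = pquot x (n + 1) * qq x (n + 1) + qq x n := by
  match n with
  | 0 => simp [qq, qden]
  | m + 1 => show qden x (m + 2) = _; rw [qden]; rfl

lemma pp_rec (x : ℝ) (n : ℕ) :
    pp x (n + 2) = pquot x (n + 1) * pp x (n + 1) + pp x n := by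
  match n with
  | 0 => simp [pp, pnum]
  | m + 1 => show pnum x (m + 2) = _; rw [pnum]; rfl

lemma fract_facts {y : ℝ} (h : Irrational y) :
    Irrational (Int.fract y) ∧ 0 < Int.fract y ∧ Int.fract y < 1 := by
  have hirr : Irrational (Int.fract y) := by
    rw [Int.fract]; exact h.sub_intCast ⌊y⌋
  have hne : Int.fract y ≠ 0 := fun hh => hirr.ne_int 0 (by simpa using hh)
  exact ⟨hirr, lt_of_le_of_ne (Int.fract_nonneg y) (Ne.symm hne), Int.fract_lt_one y⟩

lemma gauss_facts {x : ℝ} (hx : Irrational x) (n : ℕ) :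
    Irrational (gaussIter x n) ∧ 0 < gaussIter x n ∧ gaussIter x n < 1 := by
  induction n with
  | zero => exact fract_facts hx
  | succ n ih => exact fract_facts (ih.1.inv)

lemma one_lt_inv_gauss {x : ℝ} (hx : Irrational x) (n : ℕ) :
    1 < (gaussIter x n)⁻¹ := by
  obtain ⟨-, h0, h1⟩ := gauss_facts hx n
  exact (one_lt_inv₀ h0).mpr h1

lemma pquot_one_le {x : ℝ} (hx : Irrational x) (n : ℕ) :
    1 ≤ pquot x (n + 1) := by
  show (1 : ℤ) ≤ ⌊(gaussIter x n)⁻¹⌋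
  exact Int.le_floor.2 (by exact_mod_cast (one_lt_inv_gauss hx n).le)

lemma qden_lower {x : ℝ} (hx : Irrational x) : ∀ n : ℕ, 1 ≤ qden x n ∧ (n : ℤ) ≤ qden x n := by
  intro n
  induction n using Nat.strong_induction_on with
  | _ n ih =>
    match n with
    | 0 => simp [qden]
    | 1 => simpa [qden] using pquot_one_le hx 0
    | n + 2 =>
      have h1 := ih n (by omega)
      have h2 := ih (n + 1) (by omega)
      have ha : 1 ≤ pquot x (n + 2) := pquot_one_le hx (n + 1)
      have hmul : 1 * qden x (n + 1) ≤ pquot x (n + 2) * qden x (n + 1) :=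
        mul_le_mul_of_nonneg_right ha (le_trans zero_le_one h2.1)
      rw [qden]
      push_cast
      have h22 : (n : ℤ) + 1 ≤ qden x (n + 1) := by exact_mod_cast h2.2
      constructor <;> [linarith [h1.1, h2.1, hmul]; linarith [h1.2, h22, hmul]]


lemma gauss_inv_eq {x : ℝ} (n : ℕ) :
    (gaussIter x n)⁻¹ = (pquot x (n + 1) : ℝ) + gaussIter x (n + 1) := by
  show _ = (⌊(gaussIter x n)⁻¹⌋ : ℝ) + Int.fract (gaussIter x n)⁻¹
  rw [Int.floor_add_fract]

lemma forward_id {x : ℝ} (hx : Irrational x) : ∀ n : ℕ,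
    x * ((qq x (n + 1) : ℝ) + (qq x n : ℝ) * gaussIter x n)
      = (pp x (n + 1) : ℝ) + (pp x n : ℝ) * gaussIter x n := by
  intro n
  induction n with
  | zero =>
    simp only [qq, pp, qden, pnum, pquot, gaussIter]
    push_cast
    simp [Int.floor_add_fract]
  | succ n ih =>
    have hg0 : 0 < gaussIter x n := (gauss_facts hx n).2.1
    have hne : gaussIter x n ≠ 0 := ne_of_gt hg0
    have key : gaussIter x (n + 1) = (gaussIter x n)⁻¹ - (pquot x (n + 1) : ℝ) := by
      rw [gauss_inv_eq]; ring
    rw [qq_rec, pp_rec, key]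
    push_cast
    field_simp
    nlinarith [ih, hg0]

noncomputable def Efun (x : ℝ) (n : ℕ) : ℝ := (pp x n : ℝ) - x * (qq x n : ℝ)

lemma Efun_rec {x : ℝ} (hx : Irrational x) (n : ℕ) :
    Efun x (n + 1) = -(gaussIter x n) * Efun x n := by
  have h := forward_id hx n
  simp only [Efun]
  nlinarith [h]

lemma Efun_facts {x : ℝ} (hx : Irrational x) : ∀ n : ℕ,
    0 < (-1 : ℝ) ^ n * Efun x n ∧ |Efun x n| ≤ 1 := by
  intro n
  induction n with
  | zero => norm_num [Efun, pp, qq]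
  | succ n ih =>
    obtain ⟨-, hg0, hg1⟩ := gauss_facts hx n
    constructor
    · calc (0:ℝ) < gaussIter x n * ((-1:ℝ)^n * Efun x n) := mul_pos hg0 ih.1
      _ = (-1:ℝ)^(n+1) * Efun x (n+1) := by rw [Efun_rec hx n]; ring
    · rw [Efun_rec hx n, abs_mul, abs_neg, abs_of_pos hg0]
      calc gaussIter x n * |Efun x n| ≤ 1 * 1 :=
        mul_le_mul hg1.le ih.2 (abs_nonneg _) zero_le_one
      _ = 1 := one_mul 1


noncomputable def cfy (x : ℝ) (n : ℕ) (t : ℝ) : ℝ :=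
  ((pp x (n + 1) : ℝ) + (pp x n : ℝ) * t) / ((qq x (n + 1) : ℝ) + (qq x n : ℝ) * t)

lemma qq_succ_ge_one {x : ℝ} (hx : Irrational x) (n : ℕ) : (1 : ℝ) ≤ (qq x (n + 1) : ℝ) := by
  have := (qden_lower hx n).1
  simp only [qq]
  exact_mod_cast this

lemma qq_nonneg {x : ℝ} (hx : Irrational x) (n : ℕ) : (0 : ℝ) ≤ (qq x n : ℝ) := by
  cases n with
  | zero => simp [qq]
  | succ m => linarith [qq_succ_ge_one hx m]

lemma den_pos {x : ℝ} (hx : Irrational x) (n : ℕ) {t : ℝ} (h0 : 0 < t) :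
    0 < (qq x (n + 1) : ℝ) + (qq x n : ℝ) * t := by
  have h1 := qq_succ_ge_one hx n
  have h2 := qq_nonneg hx n
  nlinarith

lemma backward {x : ℝ} (hx : Irrational x) : ∀ (n : ℕ) (t : ℝ), Irrational t → 0 < t → t < 1 →
    Irrational (cfy x n t) ∧ (∀ k, k ≤ n → pquot (cfy x n t) k = pquot x k) ∧
    gaussIter (cfy x n t) n = t := by
  intro n
  induction n with
  | zero =>
    intro t ht h0 h1
    have hy : cfy x 0 t = ((pquot x 0 : ℤ) : ℝ) + t := by
      simp [cfy, pp, qq, pnum, qden]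
    rw [hy]
    have hirr : Irrational (((pquot x 0 : ℤ) : ℝ) + t) := ht.intCast_add (pquot x 0)
    refine ⟨hirr, ?_, ?_⟩
    · intro k hk
      have hk0 : k = 0 := Nat.le_zero.mp hk
      subst hk0
      show ⌊((pquot x 0 : ℤ) : ℝ) + t⌋ = pquot x 0
      rw [Int.floor_intCast_add, Int.floor_eq_zero_iff.mpr ⟨h0.le, h1⟩, add_zero]
    · show Int.fract (((pquot x 0 : ℤ) : ℝ) + t) = t
      rw [Int.fract_intCast_add, Int.fract_eq_self.mpr ⟨h0.le, h1⟩]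
  | succ n ih =>
    intro t ht h0 h1
    have ha : 1 ≤ pquot x (n + 1) := pquot_one_le hx n
    have haR : (1 : ℝ) ≤ ((pquot x (n + 1) : ℤ) : ℝ) := by exact_mod_cast ha
    have hat : (1 : ℝ) < ((pquot x (n + 1) : ℤ) : ℝ) + t := by linarith
    have hat0 : (0 : ℝ) < ((pquot x (n + 1) : ℤ) : ℝ) + t := by linarith
    have hs0 : 0 < (((pquot x (n + 1) : ℤ) : ℝ) + t)⁻¹ := inv_pos.2 hat0
    have hs1 : (((pquot x (n + 1) : ℤ) : ℝ) + t)⁻¹ < 1 := inv_lt_one_of_one_lt₀ hat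
    have hsirr : Irrational (((pquot x (n + 1) : ℤ) : ℝ) + t)⁻¹ := (ht.intCast_add _).inv
    have key : cfy x (n + 1) t = cfy x n (((pquot x (n + 1) : ℤ) : ℝ) + t)⁻¹ := by
      unfold cfy
      rw [qq_rec, pp_rec]
      have d1 : (0 : ℝ) < ((pquot x (n+1) * qq x (n+1) + qq x n : ℤ) : ℝ) + (qq x (n + 1) : ℝ) * t := by
        push_cast
        have h1' := qq_succ_ge_one hx n
        have h2' := qq_nonneg hx n
        nlinarith
      have d2 : (0 : ℝ) < (qq x (n + 1) : ℝ) + (qq x n : ℝ) * (((pquot x (n + 1) : ℤ) : ℝ) + t)⁻¹ :=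
        den_pos hx n hs0
      rw [div_eq_div_iff (by push_cast at d1 ⊢; linarith) (ne_of_gt d2)]
      push_cast
      field_simp
      ring
    obtain ⟨hyirr, hpq, hg⟩ := ih _ hsirr hs0 hs1
    rw [key]
    refine ⟨hyirr, ?_, ?_⟩
    · intro k hk
      rcases Nat.lt_or_ge k (n + 1) with h | h
      · exact hpq k (by omega)
      · have hk1 : k = n + 1 := by omega
        subst hk1
        show ⌊(gaussIter (cfy x n (((pquot x (n + 1) : ℤ) : ℝ) + t)⁻¹) n)⁻¹⌋ = pquot x (n + 1)
        rw [hg, inv_inv, Int.floor_intCast_add, Int.floor_eq_zero_iff.mpr ⟨h0.le, h1⟩, add_zero]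
    · show Int.fract (gaussIter (cfy x n (((pquot x (n + 1) : ℤ) : ℝ) + t)⁻¹) n)⁻¹
          = t
      rw [hg, inv_inv, Int.fract_intCast_add, Int.fract_eq_self.mpr ⟨h0.le, h1⟩]


lemma gold_floor : ⌊goldenRatio⌋ = 1 := by
  rw [Int.floor_eq_iff]
  constructor
  · exact_mod_cast one_lt_goldenRatio.le
  · push_cast
    linarith [goldenRatio_lt_two]

lemma gold_fract : Int.fract goldenRatio = goldenRatio - 1 := by
  rw [Int.fract, gold_floor]; norm_num

lemma gold_inv : (goldenRatio - 1)⁻¹ = goldenRatio := by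
  have h : (goldenRatio - 1) * goldenRatio = 1 := by
    have := goldenRatio_sq
    nlinarith
  exact inv_eq_of_mul_eq_one_right h

noncomputable def gy (x : ℝ) (n : ℕ) : ℝ :=
  cfy x n ((((pquot x (n + 1) : ℤ) : ℝ) + goldenRatio)⁻¹)

lemma gy_spec {x : ℝ} (hx : Irrational x) (n : ℕ) :
    Irrational (gy x n) ∧
    (∀ k, k ≤ n → pquot (gy x n) k = pquot x k) ∧
    pquot (gy x n) (n + 1) = pquot x (n + 1) + 1 ∧
    (∀ m : ℕ, gaussIter (gy x n) (n + 1 + m) = goldenRatio - 1) ∧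
    gaussIter (gy x n) n = (((pquot x (n + 1) : ℤ) : ℝ) + goldenRatio)⁻¹ := by
  have ha : 1 ≤ pquot x (n + 1) := pquot_one_le hx n
  have haR : (1 : ℝ) ≤ ((pquot x (n + 1) : ℤ) : ℝ) := by exact_mod_cast ha
  have hgold1 : (1 : ℝ) < goldenRatio := one_lt_goldenRatio
  have hat : (1 : ℝ) < ((pquot x (n + 1) : ℤ) : ℝ) + goldenRatio := by linarith
  have hat0 : (0 : ℝ) < ((pquot x (n + 1) : ℤ) : ℝ) + goldenRatio := by linarith
  have ht0 : 0 < ((((pquot x (n + 1) : ℤ) : ℝ) + goldenRatio))⁻¹ := inv_pos.2 hat0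
  have ht1 : ((((pquot x (n + 1) : ℤ) : ℝ) + goldenRatio))⁻¹ < 1 := inv_lt_one_of_one_lt₀ hat
  have htirr : Irrational ((((pquot x (n + 1) : ℤ) : ℝ) + goldenRatio))⁻¹ :=
    (goldenRatio_irrational.intCast_add _).inv
  obtain ⟨hyirr, hpq, hg⟩ := backward hx n _ htirr ht0 ht1
  have hgn1 : gaussIter (gy x n) (n + 1) = goldenRatio - 1 := by
    show Int.fract (gaussIter (gy x n) n)⁻¹ = _
    rw [show gaussIter (gy x n) n = ((((pquot x (n + 1) : ℤ) : ℝ) + goldenRatio))⁻¹ from hg,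
      inv_inv, Int.fract_intCast_add, gold_fract]
  have hgtail : ∀ m : ℕ, gaussIter (gy x n) (n + 1 + m) = goldenRatio - 1 := by
    intro m
    induction m with
    | zero => exact hgn1
    | succ m ihm =>
      show Int.fract (gaussIter (gy x n) (n + 1 + m))⁻¹ = _
      rw [ihm, gold_inv, gold_fract]
  refine ⟨hyirr, hpq, ?_, hgtail, hg⟩
  show ⌊(gaussIter (gy x n) n)⁻¹⌋ = _
  rw [show gaussIter (gy x n) n = ((((pquot x (n + 1) : ℤ) : ℝ) + goldenRatio))⁻¹ from hg,
    inv_inv, Int.floor_intCast_add, gold_floor]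

lemma gy_pquot_tail {x : ℝ} (hx : Irrational x) (n m : ℕ) :
    pquot (gy x n) (n + 2 + m) = 1 := by
  obtain ⟨-, -, -, htail, -⟩ := gy_spec hx n
  have hidx : n + 2 + m = (n + 1 + m) + 1 := by omega
  rw [hidx]
  show ⌊(gaussIter (gy x n) (n + 1 + m))⁻¹⌋ = 1
  rw [htail m, gold_inv, gold_floor]

lemma qden_congr {x y : ℝ} {n : ℕ} (h : ∀ k, k ≤ n → pquot y k = pquot x k) :
    ∀ k, k ≤ n → qden y k = qden x k := by
  intro k
  induction k using Nat.strong_induction_on with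
  | _ k ih =>
    intro hk
    match k with
    | 0 => simp [qden]
    | 1 => simp only [qden]; exact h 1 hk
    | k + 2 =>
      rw [qden, qden, h (k + 2) hk, ih (k + 1) (by omega) (by omega), ih k (by omega) (by omega)]


lemma term_nonneg {y : ℝ} (hy : Irrational y) (k : ℕ) : 0 ≤ brjunoTerm y k := by
  have h1 : (1 : ℝ) ≤ ((pquot y (k + 1) : ℤ) : ℝ) := by exact_mod_cast pquot_one_le hy k
  have h2 : (0 : ℝ) ≤ (qden y k : ℝ) := by
    have := (qden_lower hy k).1
    exact_mod_cast le_trans zero_le_one this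
  exact div_nonneg (Real.log_nonneg h1) h2

lemma brjuno_eq_tsum {y : ℝ} (hy : Irrational y) :
    brjuno y = ∑' k, ENNReal.ofReal (brjunoTerm y k) := by
  rw [brjuno, if_pos hy]

lemma gy_brjuno {x : ℝ} (hx : Irrational x) (n : ℕ) :
    brjuno (gy x n) ≠ ⊤ ∧
    (brjuno (gy x n)).toReal =
      (∑ k ∈ Finset.range n, brjunoTerm x k)
        + Real.log (((pquot x (n + 1) : ℤ) : ℝ) + 1) / (qden x n : ℝ) := by
  obtain ⟨hyirr, hpq, hpq1, htail, hg⟩ := gy_spec hx n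
  have hqd := qden_congr hpq
  have hterm_lt : ∀ k, k < n → brjunoTerm (gy x n) k = brjunoTerm x k := by
    intro k hk
    unfold brjunoTerm
    rw [hpq (k + 1) (by omega), hqd k (by omega)]
  have hterm_n : brjunoTerm (gy x n) n
      = Real.log (((pquot x (n + 1) : ℤ) : ℝ) + 1) / (qden x n : ℝ) := by
    unfold brjunoTerm
    rw [hpq1, hqd n le_rfl]
    push_cast
    ring_nf
  have hterm_zero : ∀ k, n + 1 ≤ k → brjunoTerm (gy x n) k = 0 := by
    intro k hk
    obtain ⟨m, rfl⟩ : ∃ m, k = n + 1 + m := ⟨k - (n + 1), by omega⟩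
    unfold brjunoTerm
    have : n + 1 + m + 1 = n + 2 + m := by omega
    rw [this, gy_pquot_tail hx n m]
    norm_num
  have hsum : brjuno (gy x n)
      = ∑ k ∈ Finset.range (n + 1), ENNReal.ofReal (brjunoTerm (gy x n) k) := by
    rw [brjuno_eq_tsum hyirr]
    refine tsum_eq_sum ?_
    intro k hk
    rw [hterm_zero k (by simpa [Finset.mem_range, Nat.lt_succ_iff, not_le] using
      (by exact fun h => hk (Finset.mem_range.2 (by omega)) : ¬ k < n + 1))]
    · simp
  constructor
  · rw [hsum]
    exact (ENNReal.sum_lt_top.2 (fun k _ => ENNReal.ofReal_lt_top)).ne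
  · rw [hsum, ENNReal.toReal_sum (fun k _ => ENNReal.ofReal_ne_top)]
    rw [Finset.sum_range_succ]
    have : ∀ k ∈ Finset.range n,
        (ENNReal.ofReal (brjunoTerm (gy x n) k)).toReal = brjunoTerm x k := by
      intro k hk
      rw [ENNReal.toReal_ofReal (term_nonneg hyirr k), hterm_lt k (Finset.mem_range.1 hk)]
    rw [Finset.sum_congr rfl this, ENNReal.toReal_ofReal (term_nonneg hyirr n), hterm_n]

lemma gy_sub_x {x : ℝ} (hx : Irrational x) (n : ℕ) :
    gy x n - x =
      (((((pquot x (n + 1) : ℤ) : ℝ) + goldenRatio)⁻¹ - gaussIter x n) * Efun x n)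
        / ((qq x (n + 1) : ℝ) + (qq x n : ℝ) * ((((pquot x (n + 1) : ℤ) : ℝ) + goldenRatio)⁻¹)) := by
  have haR : (1 : ℝ) ≤ ((pquot x (n + 1) : ℤ) : ℝ) := by exact_mod_cast pquot_one_le hx n
  have hat0 : (0 : ℝ) < ((pquot x (n + 1) : ℤ) : ℝ) + goldenRatio := by
    linarith [one_lt_goldenRatio]
  have ht0 : 0 < ((((pquot x (n + 1) : ℤ) : ℝ) + goldenRatio))⁻¹ := inv_pos.2 hat0
  have hD := den_pos hx n ht0
  have hf := forward_id hx n
  unfold gy cfy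
  set t : ℝ := ((((pquot x (n + 1) : ℤ) : ℝ) + goldenRatio))⁻¹ with htdef
  set D : ℝ := (qq x (n + 1) : ℝ) + (qq x n : ℝ) * t with hDdef
  rw [eq_div_iff hD.ne', sub_mul, div_mul_cancel₀ _ hD.ne']
  simp only [Efun, hDdef]
  linear_combination -hf


lemma brjuno_toReal_split {x : ℝ} (hx : Irrational x) (hB : brjuno x ≠ ⊤) (n : ℕ) :
    (brjuno x).toReal = (∑ k ∈ Finset.range n, brjunoTerm x k)
      + (∑' k, ENNReal.ofReal (brjunoTerm x (k + n))).toReal := by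
  have hsplit := Summable.sum_add_tsum_nat_add' (f := fun k => ENNReal.ofReal (brjunoTerm x k)) (k := n)
    ENNReal.summable
  rw [brjuno_eq_tsum hx] at hB ⊢
  have h1 : (∑ k ∈ Finset.range n, ENNReal.ofReal (brjunoTerm x k)) ≠ ⊤ :=
    (ENNReal.sum_lt_top.2 (fun k _ => ENNReal.ofReal_lt_top)).ne
  have h2 : (∑' k, ENNReal.ofReal (brjunoTerm x (k + n))) ≠ ⊤ := by
    intro h
    rw [← hsplit, h, add_top] at hB
    exact hB rfl
  rw [← hsplit, ENNReal.toReal_add h1 h2,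
    ENNReal.toReal_sum (fun k _ => ENNReal.ofReal_ne_top)]
  congr 1
  exact Finset.sum_congr rfl (fun k _ => ENNReal.toReal_ofReal (term_nonneg hx k))

lemma term_le_tail {x : ℝ} (hx : Irrational x) (hB : brjuno x ≠ ⊤) (n : ℕ) :
    brjunoTerm x n ≤ (∑' k, ENNReal.ofReal (brjunoTerm x (k + n))).toReal := by
  have hsplit := Summable.sum_add_tsum_nat_add' (f := fun k => ENNReal.ofReal (brjunoTerm x k)) (k := n)
    ENNReal.summable
  rw [brjuno_eq_tsum hx] at hB
  have h2 : (∑' k, ENNReal.ofReal (brjunoTerm x (k + n))) ≠ ⊤ := by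
    intro h
    rw [← hsplit, h, add_top] at hB
    exact hB rfl
  have hle : ENNReal.ofReal (brjunoTerm x n)
      ≤ ∑' k, ENNReal.ofReal (brjunoTerm x (k + n)) := by
    simpa using ENNReal.le_tsum (f := fun k => ENNReal.ofReal (brjunoTerm x (k + n))) 0
  calc brjunoTerm x n = (ENNReal.ofReal (brjunoTerm x n)).toReal :=
        (ENNReal.toReal_ofReal (term_nonneg hx n)).symm
    _ ≤ _ := ENNReal.toReal_mono h2 hle

lemma gy_close {x : ℝ} (hx : Irrational x) (hB : brjuno x ≠ ⊤) (n : ℕ) :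
    |(brjuno (gy x n)).toReal - (brjuno x).toReal|
      ≤ 2 * (∑' k, ENNReal.ofReal (brjunoTerm x (k + n))).toReal
        + Real.log 2 / (qden x n : ℝ) := by
  have haR : (1 : ℝ) ≤ ((pquot x (n + 1) : ℤ) : ℝ) := by exact_mod_cast pquot_one_le hx n
  have hq : (1 : ℝ) ≤ (qden x n : ℝ) := by exact_mod_cast (qden_lower hx n).1
  have hq0 : (0 : ℝ) < (qden x n : ℝ) := lt_of_lt_of_le zero_lt_one hq
  rw [(gy_brjuno hx n).2, brjuno_toReal_split hx hB n]
  set S := ∑ k ∈ Finset.range n, brjunoTerm x k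
  set T := (∑' k, ENNReal.ofReal (brjunoTerm x (k + n))).toReal with hT
  set L := Real.log (((pquot x (n + 1) : ℤ) : ℝ) + 1) / (qden x n : ℝ) with hL
  have h0L : 0 ≤ L := div_nonneg (Real.log_nonneg (by linarith)) hq0.le
  have h0T : 0 ≤ T := ENNReal.toReal_nonneg
  have hc0 : 0 ≤ Real.log 2 / (qden x n : ℝ) :=
    div_nonneg (Real.log_nonneg (by norm_num)) hq0.le
  have hlog : Real.log (((pquot x (n + 1) : ℤ) : ℝ) + 1)
      ≤ Real.log 2 + Real.log ((pquot x (n + 1) : ℤ) : ℝ) := by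
    rw [← Real.log_mul (by norm_num) (by linarith)]
    exact Real.log_le_log (by linarith) (by linarith)
  have hLb : L ≤ T + Real.log 2 / (qden x n : ℝ) := by
    have h1 : L ≤ (Real.log 2 + Real.log ((pquot x (n + 1) : ℤ) : ℝ)) / (qden x n : ℝ) :=
      (div_le_div_iff_of_pos_right hq0).2 hlog
    have h2 : (Real.log 2 + Real.log ((pquot x (n + 1) : ℤ) : ℝ)) / (qden x n : ℝ)
        = Real.log 2 / (qden x n : ℝ) + brjunoTerm x n := by
      rw [add_div]; rfl
    have h3 := term_le_tail hx hB n
    rw [← hT] at h3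
    rw [h2] at h1
    linarith
  have : S + L - (S + T) = L - T := by ring
  rw [this]
  rw [abs_le]
  constructor <;> linarith

lemma gy_side_dist {x : ℝ} (hx : Irrational x) (n : ℕ) :
    (Even n → gy x n < x) ∧ (¬ Even n → x < gy x n) ∧
      |gy x n - x| ≤ ((qden x n : ℝ))⁻¹ := by
  have haR : (1 : ℝ) ≤ ((pquot x (n + 1) : ℤ) : ℝ) := by exact_mod_cast pquot_one_le hx n
  have hgold1 : (1 : ℝ) < goldenRatio := one_lt_goldenRatio
  obtain ⟨-, hg0, hg1⟩ := gauss_facts hx n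
  obtain ⟨-, hg0', hg1'⟩ := gauss_facts hx (n + 1)
  have hat0 : (0 : ℝ) < ((pquot x (n + 1) : ℤ) : ℝ) + goldenRatio := by linarith
  have ht0 : 0 < ((((pquot x (n + 1) : ℤ) : ℝ) + goldenRatio))⁻¹ := inv_pos.2 hat0
  have hginv : (gaussIter x n)⁻¹ = ((pquot x (n + 1) : ℤ) : ℝ) + gaussIter x (n + 1) :=
    gauss_inv_eq n
  have hlt : (gaussIter x n)⁻¹ < ((pquot x (n + 1) : ℤ) : ℝ) + goldenRatio := by
    rw [hginv]; linarith
  have htg : ((((pquot x (n + 1) : ℤ) : ℝ) + goldenRatio))⁻¹ < gaussIter x n := by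
    have h := inv_strictAnti₀ (inv_pos.2 hg0) hlt
    rwa [inv_inv] at h
  have hE := Efun_facts hx n
  have hD := den_pos hx n ht0
  have hq1 : (qq x (n + 1) : ℝ) = (qden x n : ℝ) := by simp [qq]
  have hq : (1 : ℝ) ≤ (qden x n : ℝ) := by exact_mod_cast (qden_lower hx n).1
  have hq0 : (0 : ℝ) < (qden x n : ℝ) := lt_of_lt_of_le zero_lt_one hq
  have hDge : (qden x n : ℝ) ≤ (qq x (n + 1) : ℝ)
      + (qq x n : ℝ) * ((((pquot x (n + 1) : ℤ) : ℝ) + goldenRatio))⁻¹ := by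
    rw [hq1]
    nlinarith [qq_nonneg hx n, ht0]
  have hsub := gy_sub_x hx n
  refine ⟨?_, ?_, ?_⟩
  · intro hev
    have hEpos : 0 < Efun x n := by
      have := hE.1
      rwa [hev.neg_one_pow, one_mul] at this
    have : gy x n - x < 0 := by
      rw [hsub]
      exact div_neg_of_neg_of_pos (mul_neg_of_neg_of_pos (by linarith) hEpos) hD
    linarith
  · intro hodd
    have hEneg : Efun x n < 0 := by
      have := hE.1
      rw [(Nat.not_even_iff_odd.mp hodd).neg_one_pow] at this
      linarith
    have : 0 < gy x n - x := by
      rw [hsub]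
      exact div_pos (mul_pos_of_neg_of_neg (by linarith) hEneg) hD
    linarith
  · rw [hsub, abs_div, abs_mul, abs_of_pos hD]
    have h1 : |(((pquot x (n + 1) : ℤ) : ℝ) + goldenRatio)⁻¹ - gaussIter x n| ≤ 1 := by
      rw [abs_le]
      constructor <;> [linarith; linarith]
    have h2 := hE.2
    calc |(((pquot x (n + 1) : ℤ) : ℝ) + goldenRatio)⁻¹ - gaussIter x n| * |Efun x n|
          / ((qq x (n + 1) : ℝ) + (qq x n : ℝ) * ((((pquot x (n + 1) : ℤ) : ℝ) + goldenRatio))⁻¹)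
        ≤ 1 / ((qq x (n + 1) : ℝ) + (qq x n : ℝ)
            * ((((pquot x (n + 1) : ℤ) : ℝ) + goldenRatio))⁻¹) := by
          refine (div_le_div_iff_of_pos_right hD).2 ?_
          nlinarith [abs_nonneg (Efun x n),
            abs_nonneg ((((pquot x (n + 1) : ℤ) : ℝ) + goldenRatio)⁻¹ - gaussIter x n)]
      _ ≤ 1 / (qden x n : ℝ) := one_div_le_one_div_of_le hq0 hDge
      _ = ((qden x n : ℝ))⁻¹ := one_div _

end BrjunoAux

/-- approximation of a Brjuno number by Brjuno numbers from both sides,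
with almost the same Brjuno value. -/
theorem statement1 (x : ℝ) (hx : Irrational x) (hB : brjuno x ≠ ⊤) :
    ∀ ε : ℝ, 0 < ε →
      ∃ αm αp : ℝ, Irrational αm ∧ Irrational αp ∧
        αm < x ∧ x < αp ∧ αp - αm < ε ∧
        brjuno αm ≠ ⊤ ∧ brjuno αp ≠ ⊤ ∧
        |(brjuno αm).toReal - (brjuno x).toReal| < ε ∧
        |(brjuno αp).toReal - (brjuno x).toReal| < ε := by
  intro ε hε
  have hBt : (∑' k, ENNReal.ofReal (brjunoTerm x k)) ≠ ⊤ := by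
    rwa [brjuno_eq_tsum hx] at hB
  have h1 : Filter.Tendsto (fun n => (∑' k, ENNReal.ofReal (brjunoTerm x (k + n))).toReal)
      Filter.atTop (𝓝 (0 : ℝ)) := by
    have h0 := ENNReal.tendsto_sum_nat_add (fun k => ENNReal.ofReal (brjunoTerm x k)) hBt
    have h2 := (ENNReal.tendsto_toReal (show (0 : ℝ≥0∞) ≠ ⊤ by simp)).comp h0
    simpa [Function.comp_def] using h2
  rw [Metric.tendsto_atTop] at h1
  obtain ⟨N1, hN1⟩ := h1 (ε / 8) (by linarith)
  obtain ⟨M, hM⟩ := exists_nat_gt (max (2 / ε) (4 * Real.log 2 / ε))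
  set K := max M N1 + 1 with hKdef
  have hKM : (M : ℝ) < (K : ℝ) := by
    have : M < K := by omega
    exact_mod_cast this
  have key : ∀ n : ℕ, K ≤ n →
      |(brjuno (gy x n)).toReal - (brjuno x).toReal| < ε ∧ |gy x n - x| < ε / 2 := by
    intro n hn
    have hnM : (M : ℝ) < (n : ℝ) := lt_of_lt_of_le hKM (by exact_mod_cast hn)
    have hn2 : 2 / ε < (n : ℝ) := lt_of_le_of_lt (le_max_left _ _) (lt_trans hM hnM)
    have hn4 : 4 * Real.log 2 / ε < (n : ℝ) :=
      lt_of_le_of_lt (le_max_right _ _) (lt_trans hM hnM)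
    have hn0 : (0 : ℝ) < (n : ℝ) := lt_of_le_of_lt (by positivity) hn2
    have hq_n : (n : ℝ) ≤ (qden x n : ℝ) := by exact_mod_cast (qden_lower hx n).2
    have hq0 : (0 : ℝ) < (qden x n : ℝ) := lt_of_lt_of_le hn0 hq_n
    have htail : (∑' k, ENNReal.ofReal (brjunoTerm x (k + n))).toReal < ε / 8 := by
      have := hN1 n (le_trans (by omega) hn)
      rw [Real.dist_eq, sub_zero] at this
      exact lt_of_le_of_lt (le_abs_self _) this
    have hlog2 : Real.log 2 / (qden x n : ℝ) < ε / 4 := by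
      have ha : Real.log 2 / (qden x n : ℝ) ≤ Real.log 2 / (n : ℝ) := by
        gcongr
      have hb : Real.log 2 / (n : ℝ) < ε / 4 := by
        rw [div_lt_iff₀ hn0]
        have := (div_lt_iff₀ hε).1 hn4
        nlinarith
      linarith
    constructor
    · have := gy_close hx hB n
      have h0T : (0 : ℝ) ≤ (∑' k, ENNReal.ofReal (brjunoTerm x (k + n))).toReal :=
        ENNReal.toReal_nonneg
      linarith
    · have hd := (gy_side_dist hx n).2.2
      have hqi : ((qden x n : ℝ))⁻¹ < ε / 2 := by
        rw [inv_lt_iff_one_lt_mul₀ hq0]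
        have h2n : 2 / ε < (qden x n : ℝ) := lt_of_lt_of_le hn2 hq_n
        have := (div_lt_iff₀ hε).1 h2n
        nlinarith
      linarith
  have hK1 : K ≤ 2 * K := by omega
  have hK2 : K ≤ 2 * K + 1 := by omega
  obtain ⟨hcm, hdm⟩ := key (2 * K) hK1
  obtain ⟨hcp, hdp⟩ := key (2 * K + 1) hK2
  have hm_lt : gy x (2 * K) < x := (gy_side_dist hx (2 * K)).1 (even_two_mul K)
  have hp_gt : x < gy x (2 * K + 1) := by
    refine (gy_side_dist hx (2 * K + 1)).2.1 ?_
    simp [Nat.even_add_one, parity_simps]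
  refine ⟨gy x (2 * K), gy x (2 * K + 1), (gy_spec hx (2 * K)).1, (gy_spec hx (2 * K + 1)).1,
    hm_lt, hp_gt, ?_, (gy_brjuno hx (2 * K)).1, (gy_brjuno hx (2 * K + 1)).1, hcm, hcp⟩
  have h1' := abs_lt.1 hdm
  have h2' := abs_lt.1 hdp
  linarith [h1'.1, h2'.2]
end

section
/- Let x be an irrational real number with partial quotients (aₖ(x)). If a_{2n}(x) > 1 for infinitely many n ∈ ℕ, then for every ε > 0 there exists an irrational α⁻ with x − ε < α⁻ < x and B(α⁻) < B(x). Symmetrically, if a_{2n+1}(x) > 1 for infinitely many n ∈ ℕ, then for every ε > 0 there exists an irrational α⁺ with x < α⁺ < x + ε and B(α⁺) < B(x). -/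
open scoped ENNReal Topology

-- auxiliary development
lemma irrational_gaussIter (x : ℝ) (hx : Irrational x) : ∀ k, Irrational (gaussIter x k)
  | 0 => by
    show Irrational (Int.fract x)
    rw [Int.fract]; exact hx.sub_intCast ⌊x⌋
  | k + 1 => by
    have ih := irrational_gaussIter x hx k
    show Irrational (Int.fract (gaussIter x k)⁻¹)
    rw [Int.fract]; exact ih.inv.sub_intCast _

lemma gaussIter_pos (x : ℝ) (hx : Irrational x) (k : ℕ) : 0 < gaussIter x k :=
  lt_of_le_of_ne (by cases k <;> exact Int.fract_nonneg _)
    (Ne.symm (irrational_gaussIter x hx k).ne_zero)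

lemma gaussIter_lt_one (x : ℝ) (k : ℕ) : gaussIter x k < 1 := by
  cases k <;> exact Int.fract_lt_one _

noncomputable def ucf (x : ℝ) : ℕ → ℝ
  | 0 => x
  | k + 1 => (gaussIter x k)⁻¹

lemma one_lt_ucf (x : ℝ) (hx : Irrational x) (k : ℕ) : 1 < ucf x (k + 1) :=
  (one_lt_inv_iff₀).2 ⟨gaussIter_pos x hx k, gaussIter_lt_one x k⟩

lemma floor_ucf (x : ℝ) (k : ℕ) : ⌊ucf x k⌋ = pquot x k := by
  cases k <;> rfl

lemma gaussIter_eq_ucf (x : ℝ) (k : ℕ) : gaussIter x k = ucf x k - pquot x k := by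
  induction k with
  | zero =>
    show Int.fract x = x - ((⌊x⌋ : ℤ) : ℝ)
    rw [Int.fract]
  | succ n ih =>
    show Int.fract (gaussIter x n)⁻¹ = _
    rw [Int.fract]
    rfl

lemma ucf_eq (x : ℝ) (hx : Irrational x) (k : ℕ) :
    ucf x k = pquot x k + (ucf x (k + 1))⁻¹ := by
  have h1 : (ucf x (k+1))⁻¹ = gaussIter x k := by
    show ((gaussIter x k)⁻¹)⁻¹ = _
    rw [inv_inv]
  rw [h1, gaussIter_eq_ucf]; ring

lemma one_le_pquot (x : ℝ) (hx : Irrational x) (k : ℕ) : 1 ≤ pquot x (k + 1) := by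
  rw [← floor_ucf]
  exact Int.le_floor.2 (by exact_mod_cast (one_lt_ucf x hx k).le)

lemma ucf_bounds (x : ℝ) (hx : Irrational x) (k : ℕ) :
    (pquot x (k+1) : ℝ) < ucf x (k+1) ∧ ucf x (k+1) < pquot x (k+1) + 1 := by
  have h := ucf_eq x hx (k+1)
  have h2 := one_lt_ucf x hx (k+1)
  have hpos : 0 < (ucf x (k+2))⁻¹ := inv_pos.2 (lt_trans one_pos h2)
  have hlt : (ucf x (k+2))⁻¹ < 1 := inv_lt_one_of_one_lt₀ h2
  constructor <;> nlinarith [h]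

lemma one_le_qden (x : ℝ) (hx : Irrational x) : ∀ k, 1 ≤ qden x k ∧ 1 ≤ qden x (k+1)
  | 0 => ⟨le_refl 1, by simpa [qden] using one_le_pquot x hx 0⟩
  | k + 1 => by
    obtain ⟨h1, h2⟩ := one_le_qden x hx k
    refine ⟨h2, ?_⟩
    show 1 ≤ pquot x (k + 2) * qden x (k + 1) + qden x k
    nlinarith [one_le_pquot x hx (k+1)]

lemma ucf_pos (x : ℝ) (hx : Irrational x) (k : ℕ) : 0 < ucf x (k+1) :=
  lt_trans one_pos (one_lt_ucf x hx k)

lemma prod_ucf_ge (x : ℝ) (hx : Irrational x) :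
    ∀ m, (2:ℝ) ^ (m / 2) ≤ ∏ k ∈ Finset.Icc 1 m, ucf x k ∧
      (2:ℝ) ^ ((m+1) / 2) ≤ ∏ k ∈ Finset.Icc 1 (m+1), ucf x k
  | 0 => by
    constructor
    · simp
    · simpa using (one_lt_ucf x hx 0).le
  | m + 1 => by
    obtain ⟨h1, h2⟩ := prod_ucf_ge x hx m
    refine ⟨h2, ?_⟩
    have hstep : (2:ℝ) ≤ ucf x (m+1) * ucf x (m+2) := by
      have e := ucf_eq x hx (m+1)
      have ha : (1:ℝ) ≤ (pquot x (m+1) : ℝ) := by exact_mod_cast one_le_pquot x hx m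
      have h3 := one_lt_ucf x hx (m+1)
      have h4 := ucf_pos x hx (m+1)
      have : 1 + (ucf x (m+2))⁻¹ ≤ ucf x (m+1) := by rw [e]; linarith
      calc (2:ℝ) ≤ (1 + (ucf x (m+2))⁻¹) * ucf x (m+2) := by
            rw [add_mul, one_mul, inv_mul_cancel₀ (ne_of_gt h4)]; linarith
        _ ≤ ucf x (m+1) * ucf x (m+2) := by nlinarith
    have hprod : ∏ k ∈ Finset.Icc 1 (m+2), ucf x k
        = (∏ k ∈ Finset.Icc 1 m, ucf x k) * (ucf x (m+1) * ucf x (m+2)) := by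
      rw [Finset.prod_Icc_succ_top (by omega), Finset.prod_Icc_succ_top (by omega)]
      ring
    have hdiv : (m + 2) / 2 = m / 2 + 1 := by omega
    rw [hprod, hdiv, pow_succ]
    have hppos : (0:ℝ) < (2:ℝ) ^ (m/2) := by positivity
    nlinarith [h1, hstep]

noncomputable def bseq (x : ℝ) (m : ℕ) (k : ℕ) : ℤ := if k ≤ m then pquot x k else 1

noncomputable def wAux (x : ℝ) (m : ℕ) : ℕ → ℝ
  | 0 => Real.goldenRatio
  | j + 1 => (bseq x m (m - j) : ℝ) + (wAux x m j)⁻¹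

noncomputable def wseq (x : ℝ) (m : ℕ) (k : ℕ) : ℝ := wAux x m (m + 1 - k)

lemma wAux_irrational (x : ℝ) (m : ℕ) : ∀ j, Irrational (wAux x m j)
  | 0 => Real.goldenRatio_irrational
  | j + 1 => ((wAux_irrational x m j).inv).intCast_add _

lemma wseq_irrational (x : ℝ) (m k : ℕ) : Irrational (wseq x m k) :=
  wAux_irrational x m _

lemma wAux_gt_one (x : ℝ) (hx : Irrational x) (m : ℕ) :
    ∀ j, j ≤ m → 1 < wAux x m j
  | 0, _ => Real.one_lt_goldenRatio
  | j + 1, hj => by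
    have ih := wAux_gt_one x hx m j (by omega)
    have hb : 1 ≤ (bseq x m (m - j) : ℝ) := by
      have h1 : m - j = (m - j - 1) + 1 := by omega
      have : 1 ≤ bseq x m (m - j) := by
        rw [bseq, if_pos (by omega), h1]
        exact one_le_pquot x hx _
      exact_mod_cast this
    show 1 < (bseq x m (m - j) : ℝ) + (wAux x m j)⁻¹
    have : 0 < (wAux x m j)⁻¹ := inv_pos.2 (lt_trans one_pos ih)
    linarith

lemma wseq_gt_one (x : ℝ) (hx : Irrational x) (m k : ℕ) (hk : 1 ≤ k) :
    1 < wseq x m k :=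
  wAux_gt_one x hx m _ (by omega)

lemma wseq_rec (x : ℝ) (hx : Irrational x) (m k : ℕ) :
    wseq x m k = (bseq x m k : ℝ) + (wseq x m (k+1))⁻¹ := by
  rcases le_or_gt k m with h | h
  · have h1 : m + 1 - k = (m - k) + 1 := by omega
    have h2 : m + 1 - (k + 1) = m - k := by omega
    rw [wseq, wseq, h1, h2]
    show (bseq x m (m - (m - k)) : ℝ) + _ = _
    have h3 : m - (m - k) = k := by omega
    rw [h3]
  · have h1 : m + 1 - k = 0 := by omega
    have h2 : m + 1 - (k + 1) = 0 := by omega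
    rw [wseq, wseq, h1, h2]
    show Real.goldenRatio = (bseq x m k : ℝ) + Real.goldenRatio⁻¹
    rw [bseq, if_neg (by omega)]
    have h7 : (Real.goldenRatio - 1) * Real.goldenRatio = 1 := by nlinarith [Real.goldenRatio_sq]
    have h8 : Real.goldenRatio⁻¹ = Real.goldenRatio - 1 := (eq_inv_of_mul_eq_one_left h7).symm
    rw [h8]
    push_cast
    ring

lemma floor_wseq (x : ℝ) (hx : Irrational x) (m k : ℕ) :
    ⌊wseq x m k⌋ = bseq x m k := by
  rw [wseq_rec x hx m k]
  have h := wseq_gt_one x hx m (k+1) (by omega)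
  have h1 : 0 < (wseq x m (k+1))⁻¹ := inv_pos.2 (lt_trans one_pos h)
  have h2 : (wseq x m (k+1))⁻¹ < 1 := inv_lt_one_of_one_lt₀ h
  rw [Int.floor_eq_iff]
  constructor <;> simp <;> linarith

lemma wseq_pos (x : ℝ) (hx : Irrational x) (m k : ℕ) (hk : 1 ≤ k) : 0 < wseq x m k :=
  lt_trans one_pos (wseq_gt_one x hx m k hk)

lemma gaussIter_wseq (x : ℝ) (hx : Irrational x) (m : ℕ) :
    ∀ k, gaussIter (wseq x m 0) k = (wseq x m (k+1))⁻¹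
  | 0 => by
    show Int.fract (wseq x m 0) = _
    rw [Int.fract, floor_wseq x hx m 0, wseq_rec x hx m 0]
    ring
  | k + 1 => by
    show Int.fract (gaussIter (wseq x m 0) k)⁻¹ = _
    rw [gaussIter_wseq x hx m k, inv_inv, Int.fract, floor_wseq x hx m (k+1),
      wseq_rec x hx m (k+1)]
    ring

lemma pquot_wseq (x : ℝ) (hx : Irrational x) (m : ℕ) :
    ∀ k, pquot (wseq x m 0) k = bseq x m k
  | 0 => by
    show ⌊wseq x m 0⌋ = _
    exact floor_wseq x hx m 0
  | k + 1 => by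
    show ⌊(gaussIter (wseq x m 0) k)⁻¹⌋ = _
    rw [gaussIter_wseq x hx m k, inv_inv]
    exact floor_wseq x hx m (k+1)

lemma qden_wseq (x : ℝ) (hx : Irrational x) (m : ℕ) :
    ∀ k, (k ≤ m → qden (wseq x m 0) k = qden x k) ∧
      (k + 1 ≤ m → qden (wseq x m 0) (k+1) = qden x (k+1))
  | 0 => by
    refine ⟨fun _ => rfl, fun h1 => ?_⟩
    show pquot (wseq x m 0) 1 = pquot x 1
    rw [pquot_wseq x hx m 1, bseq, if_pos h1]
  | k + 1 => by
    obtain ⟨ih1, ih2⟩ := qden_wseq x hx m k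
    refine ⟨ih2, fun h => ?_⟩
    show pquot (wseq x m 0) (k+2) * qden (wseq x m 0) (k+1) + qden (wseq x m 0) k
      = pquot x (k+2) * qden x (k+1) + qden x k
    rw [pquot_wseq x hx m (k+2), bseq, if_pos h, ih1 (by omega), ih2 (by omega)]

lemma sign_lemma (x : ℝ) (hx : Irrational x) (m : ℕ) (hbig : 2 ≤ pquot x (m+1)) :
    ∀ j, j ≤ m + 1 →
      (Even j → wseq x m (m+1-j) < ucf x (m+1-j)) ∧
      (Odd j → ucf x (m+1-j) < wseq x m (m+1-j))
  | 0, _ => by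
    constructor
    · intro _
      have h0 : m + 1 - 0 = m + 1 := rfl
      rw [h0]
      have h1 : wseq x m (m+1) = Real.goldenRatio := by
        rw [wseq]
        have : m + 1 - (m+1) = 0 := by omega
        rw [this]
        rfl
      have h2 := (ucf_bounds x hx m).1
      have h3 : (2:ℝ) ≤ (pquot x (m+1) : ℝ) := by exact_mod_cast hbig
      rw [h1]
      calc Real.goldenRatio < 2 := Real.goldenRatio_lt_two
        _ ≤ (pquot x (m+1) : ℝ) := h3
        _ < ucf x (m+1) := h2
    · intro h
      exact absurd h (by simp)
  | j + 1, hj => by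
    obtain ⟨ih1, ih2⟩ := sign_lemma x hx m hbig j (by omega)
    have hk : m + 1 - (j+1) = m - j := by omega
    have hk1 : (m - j) + 1 = m + 1 - j := by omega
    set k := m - j with hkdef
    have hu : ucf x k = (pquot x k : ℝ) + (ucf x (k+1))⁻¹ := ucf_eq x hx k
    have hw : wseq x m k = (pquot x k : ℝ) + (wseq x m (k+1))⁻¹ := by
      rw [wseq_rec x hx m k, bseq, if_pos (by omega)]
    have hupos : 0 < ucf x (k+1) := ucf_pos x hx k
    have hwpos : 0 < wseq x m (k+1) := wseq_pos x hx m (k+1) (by omega)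
    rw [hk]
    constructor
    · intro hev
      have hodd : Odd j := Nat.not_even_iff_odd.1 (Nat.even_add_one.mp hev)
      have := ih2 hodd
      rw [← hk1, hu, hw] at *
      have : (ucf x (k+1))⁻¹ > (wseq x m (k+1))⁻¹ := by
        apply inv_strictAnti₀ hupos
        rw [hk1]; exact this
      linarith
    · intro hodd
      have hev : Even j := Nat.not_odd_iff_even.1 (Nat.odd_add_one.mp hodd)
      have := ih1 hev
      rw [← hk1] at this
      have : (ucf x (k+1))⁻¹ < (wseq x m (k+1))⁻¹ := inv_strictAnti₀ hwpos this
      rw [hu, hw]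
      linarith

lemma one_le_prod_ucf (x : ℝ) (hx : Irrational x) (a b : ℕ) (ha : 1 ≤ a) :
    1 ≤ ∏ k ∈ Finset.Icc a b, ucf x k := by
  have h : ∀ i ∈ Finset.Icc a b, (1:ℝ) ≤ ucf x i := by
    intro i hi
    have hi1 : 1 ≤ i := le_trans ha (Finset.mem_Icc.1 hi).1
    obtain ⟨j, rfl⟩ : ∃ j, i = j + 1 := ⟨i - 1, by omega⟩
    exact (one_lt_ucf x hx j).le
  calc (1:ℝ) = ∏ _k ∈ Finset.Icc a b, (1:ℝ) := by simp
    _ ≤ ∏ k ∈ Finset.Icc a b, ucf x k :=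
        Finset.prod_le_prod (by intros; norm_num) h

lemma dist_lemma (x : ℝ) (hx : Irrational x) (m : ℕ) (hm : 1 ≤ m) :
    ∀ j, j ≤ m →
      |ucf x (m-j) - wseq x m (m-j)| * ∏ k ∈ Finset.Icc (m-j+1) m, ucf x k ≤ 1
  | 0, _ => by
    have h0 : m - 0 = m := rfl
    have hemp : Finset.Icc (m+1) m = ∅ := by
      apply Finset.Icc_eq_empty; omega
    rw [h0, hemp, Finset.prod_empty, mul_one]
    obtain ⟨i, rfl⟩ : ∃ i, m = i + 1 := ⟨m - 1, by omega⟩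
    have hub := ucf_bounds x hx i
    have hw : wseq x (i+1) (i+1) = (pquot x (i+1) : ℝ) + (wseq x (i+1) (i+2))⁻¹ := by
      rw [wseq_rec x hx (i+1) (i+1), bseq, if_pos (by omega)]
    have h2 := wseq_gt_one x hx (i+1) (i+2) (by omega)
    have h3 : 0 < (wseq x (i+1) (i+2))⁻¹ := inv_pos.2 (lt_trans one_pos h2)
    have h4 : (wseq x (i+1) (i+2))⁻¹ < 1 := inv_lt_one_of_one_lt₀ h2
    rw [abs_le]
    constructor <;> [skip; skip] <;> rw [hw] <;> [nlinarith [hub.2]; nlinarith [hub.1]]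
  | j + 1, hj => by
    have ih := dist_lemma x hx m hm j (by omega)
    have hk : m - (j+1) + 1 = m - j := by omega
    set k := m - (j+1) with hkdef
    have hk1 : k + 1 = m - j := hk
    have hu : ucf x k = (pquot x k : ℝ) + (ucf x (k+1))⁻¹ := ucf_eq x hx k
    have hw : wseq x m k = (pquot x k : ℝ) + (wseq x m (k+1))⁻¹ := by
      rw [wseq_rec x hx m k, bseq, if_pos (by omega)]
    have hu1 : 0 < ucf x (k+1) := ucf_pos x hx k
    have hw1 : 1 < wseq x m (k+1) := wseq_gt_one x hx m (k+1) (by omega)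
    have hw1p : 0 < wseq x m (k+1) := lt_trans one_pos hw1
    have hsplit : Finset.Icc (k+1) m = insert (k+1) (Finset.Icc (k+2) m) := by
      ext t; simp only [Finset.mem_Icc, Finset.mem_insert]; omega
    have hnotmem : (k+1) ∉ Finset.Icc (k+2) m := by simp
    have hdiff : ucf x k - wseq x m k
        = (wseq x m (k+1) - ucf x (k+1)) / (ucf x (k+1) * wseq x m (k+1)) := by
      rw [hu, hw]
      field_simp
      ring
    have e1 : |ucf x k - wseq x m k| * (ucf x (k+1) * wseq x m (k+1))
        = |ucf x (k+1) - wseq x m (k+1)| := by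
      rw [hdiff, abs_div, abs_of_pos (mul_pos hu1 hw1p),
        div_mul_cancel₀ _ (ne_of_gt (mul_pos hu1 hw1p)), abs_sub_comm]
    rw [hsplit, Finset.prod_insert hnotmem]
    have ih' : |ucf x (k+1) - wseq x m (k+1)| * ∏ t ∈ Finset.Icc (k+2) m, ucf x t ≤ 1 := by
      have e2 : k + 2 = m - j + 1 := by omega
      rw [hk1, e2]; exact ih
    set Q := ∏ t ∈ Finset.Icc (k+2) m, ucf x t with hQ
    have hQ1 : 1 ≤ Q := one_le_prod_ucf x hx (k+2) m (by omega)
    have habs : 0 ≤ |ucf x k - wseq x m k| := abs_nonneg _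
    have habs2 : 0 ≤ |ucf x (k+1) - wseq x m (k+1)| := abs_nonneg _
    nlinarith [e1, ih', hQ1, habs, habs2, hu1, hw1]

lemma brjuno_lt (x : ℝ) (hx : Irrational x) (m : ℕ) (hbig : 2 ≤ pquot x (m+1)) :
    brjuno (wseq x m 0) < brjuno x := by
  set α := wseq x m 0 with hα0
  have hαirr : Irrational α := wseq_irrational x m 0
  have hterm_eq : ∀ k < m, brjunoTerm α k = brjunoTerm x k := by
    intro k hk
    rw [brjunoTerm, brjunoTerm, pquot_wseq x hx m (k+1), bseq, if_pos (by omega),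
      (qden_wseq x hx m k).1 (by omega)]
  have hterm_zero : ∀ k, m ≤ k → brjunoTerm α k = 0 := by
    intro k hk
    rw [brjunoTerm, pquot_wseq x hx m (k+1), bseq, if_neg (by omega)]
    norm_num
  have hαeq : brjuno α = ∑ k ∈ Finset.range m, ENNReal.ofReal (brjunoTerm x k) := by
    rw [brjuno, if_pos hαirr,
      tsum_eq_sum (s := Finset.range m)
        (fun k hk => by rw [hterm_zero k (by simpa using hk)]; simp)]
    exact Finset.sum_congr rfl (fun k hk => by rw [hterm_eq k (Finset.mem_range.1 hk)])
  set S := ∑ k ∈ Finset.range m, ENNReal.ofReal (brjunoTerm x k) with hS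
  have hSne : S ≠ ⊤ :=
    (ENNReal.sum_lt_top.2 fun k _ => ENNReal.ofReal_lt_top).ne
  have hpos : 0 < ENNReal.ofReal (brjunoTerm x m) := by
    rw [brjunoTerm]
    apply ENNReal.ofReal_pos.2
    apply div_pos
    · have h2 : (2:ℝ) ≤ (pquot x (m+1):ℝ) := by exact_mod_cast hbig
      calc (0:ℝ) < Real.log 2 := Real.log_pos (by norm_num)
        _ ≤ _ := Real.log_le_log (by norm_num) h2
    · have h1 := (one_le_qden x hx m).1
      have : (1:ℝ) ≤ (qden x m : ℝ) := by exact_mod_cast h1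
      linarith
  have hxsum : S + ENNReal.ofReal (brjunoTerm x m) ≤ brjuno x := by
    rw [brjuno, if_pos hx]
    have heq : S + ENNReal.ofReal (brjunoTerm x m)
        = ∑ k ∈ insert m (Finset.range m), ENNReal.ofReal (brjunoTerm x k) := by
      rw [Finset.sum_insert (by simp), add_comm]
    rw [heq]
    exact ENNReal.sum_le_tsum _
  rw [hαeq]
  exact lt_of_lt_of_le (ENNReal.lt_add_right hSne (ne_of_gt hpos)) hxsum

lemma key (x : ℝ) (hx : Irrational x) (m : ℕ) (hm : 1 ≤ m) (hbig : 2 ≤ pquot x (m+1)) :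
    ∃ α : ℝ, Irrational α ∧ |x - α| ≤ ((2:ℝ) ^ (m / 2))⁻¹ ∧
      (Odd m → α < x) ∧ (Even m → x < α) ∧ brjuno α < brjuno x := by
  refine ⟨wseq x m 0, wseq_irrational x m 0, ?_, ?_, ?_, brjuno_lt x hx m hbig⟩
  · have hd := dist_lemma x hx m hm m le_rfl
    have h0 : m - m = 0 := by omega
    rw [h0] at hd
    have hux : ucf x 0 = x := rfl
    rw [hux] at hd
    have hp := (prod_ucf_ge x hx m).1
    have h2p : (0:ℝ) < (2:ℝ) ^ (m / 2) := by positivity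
    rw [inv_eq_one_div, le_div_iff₀ h2p]
    have habs : 0 ≤ |x - wseq x m 0| := abs_nonneg _
    have h1 : Finset.Icc (0 + 1) m = Finset.Icc 1 m := by norm_num
    rw [h1] at hd
    nlinarith [hd, hp, habs, h2p]
  · intro hodd
    have := (sign_lemma x hx m hbig (m+1) le_rfl).1 hodd.add_one
    have h0 : m + 1 - (m+1) = 0 := by omega
    rw [h0] at this
    exact this
  · intro heven
    have := (sign_lemma x hx m hbig (m+1) le_rfl).2 heven.add_one
    have h0 : m + 1 - (m+1) = 0 := by omega
    rw [h0] at this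
    exact this


/-- points with infinitely many even (resp. odd) indexed partial quotients
bigger than 1 can be approximated from the left (resp. right) by points with strictly
smaller Brjuno value. -/
theorem statement2 (x : ℝ) (hx : Irrational x) :
    ((∀ N : ℕ, ∃ n, N ≤ n ∧ 1 < pquot x (2 * n)) →
      ∀ ε : ℝ, 0 < ε → ∃ α : ℝ, Irrational α ∧ x - ε < α ∧ α < x ∧ brjuno α < brjuno x) ∧
    ((∀ N : ℕ, ∃ n, N ≤ n ∧ 1 < pquot x (2 * n + 1)) →
      ∀ ε : ℝ, 0 < ε → ∃ α : ℝ, Irrational α ∧ x < α ∧ α < x + ε ∧ brjuno α < brjuno x) := by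

  have hbound : ∀ ε : ℝ, 0 < ε → ∃ j : ℕ, ((2:ℝ) ^ j)⁻¹ < ε := by
    intro ε hε
    obtain ⟨j, hj⟩ := exists_pow_lt_of_lt_one hε (by norm_num : (1/2 : ℝ) < 1)
    exact ⟨j, by rwa [div_pow, one_pow, one_div] at hj⟩
  have hmono : ∀ j m : ℕ, j ≤ m / 2 → ((2:ℝ) ^ (m / 2))⁻¹ ≤ ((2:ℝ) ^ j)⁻¹ := by
    intro j m hjm
    apply inv_anti₀ (by positivity)
    exact pow_le_pow_right₀ (by norm_num) hjm
  constructor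
  · intro h ε hε
    obtain ⟨j, hj⟩ := hbound ε hε
    obtain ⟨n, hn, hbig⟩ := h (j + 1)
    have hm1 : (2*n - 1) + 1 = 2 * n := by omega
    obtain ⟨α, hαirr, hdist, hodd, _, hbr⟩ :=
      key x hx (2*n - 1) (by omega) (by rw [hm1]; omega)
    have hOdd : Odd (2*n - 1) := ⟨n - 1, by omega⟩
    have hαx : α < x := hodd hOdd
    have hd2 : |x - α| < ε :=
      lt_of_le_of_lt (le_trans hdist (hmono j _ (by omega))) hj
    refine ⟨α, hαirr, ?_, hαx, hbr⟩
    have : x - α < ε := lt_of_le_of_lt (le_abs_self _) hd2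
    linarith
  · intro h ε hε
    obtain ⟨j, hj⟩ := hbound ε hε
    obtain ⟨n, hn, hbig⟩ := h (j + 1)
    obtain ⟨α, hαirr, hdist, _, heven, hbr⟩ :=
      key x hx (2*n) (by omega) (by omega)
    have hEven : Even (2*n) := ⟨n, by omega⟩
    have hαx : x < α := heven hEven
    have hd2 : |x - α| < ε :=
      lt_of_le_of_lt (le_trans hdist (hmono j _ (by omega))) hj
    refine ⟨α, hαirr, hαx, ?_, hbr⟩
    have : α - x < ε := lt_of_le_of_lt (le_abs_self _) (by rwa [abs_sub_comm] at hd2)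
    linarith
end

section
/- For every ε > 0 there exists M > 0 such that the Lebesgue measure of the set { x ∈ [0,1] : B(x) > M } is less than ε. In particular, B(x) < +∞ for Lebesgue-almost every x ∈ ℝ. -/
open scoped ENNReal Topology

open MeasureTheory Set

lemma irrational_fract {y : ℝ} (hy : Irrational y) :
    Irrational (Int.fract y) ∧ Int.fract y ∈ Set.Ioo (0:ℝ) 1 := by
  have h1 : Irrational (Int.fract y) := by
    rw [← Int.self_sub_floor y]
    exact hy.sub_intCast _
  exact ⟨h1, ⟨lt_of_le_of_ne (Int.fract_nonneg y) (Ne.symm h1.ne_zero), Int.fract_lt_one y⟩⟩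

lemma gaussIter_prop {x : ℝ} (hx : Irrational x) (k : ℕ) :
    Irrational (gaussIter x k) ∧ gaussIter x k ∈ Set.Ioo (0:ℝ) 1 := by
  induction k with
  | zero => exact irrational_fract hx
  | succ k ih => exact irrational_fract ih.1.inv

lemma gaussIter_irrational {x : ℝ} (hx : Irrational x) (k : ℕ) :
    Irrational (gaussIter x k) := (gaussIter_prop hx k).1

lemma gaussIter_mem_Ioo {x : ℝ} (hx : Irrational x) (k : ℕ) :
    gaussIter x k ∈ Set.Ioo (0:ℝ) 1 := (gaussIter_prop hx k).2

lemma one_lt_inv_gaussIter {x : ℝ} (hx : Irrational x) (k : ℕ) :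
    1 < (gaussIter x k)⁻¹ := by
  have h := gaussIter_mem_Ioo hx k
  exact (one_lt_inv_iff₀).2 ⟨h.1, h.2⟩

lemma pquot_pos {x : ℝ} (hx : Irrational x) (k : ℕ) : 1 ≤ pquot x (k + 1) := by
  show (1:ℤ) ≤ ⌊(gaussIter x k)⁻¹⌋
  exact_mod_cast Int.le_floor.2 (by exact_mod_cast (one_lt_inv_gaussIter hx k).le)

lemma qden_ge_one {x : ℝ} (hx : Irrational x) : ∀ k, 1 ≤ qden x k ∧ qden x k ≤ qden x (k+1) := by
  intro k
  induction k with
  | zero =>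
      refine ⟨le_refl _, ?_⟩
      show (1:ℤ) ≤ qden x 1
      exact pquot_pos hx 0
  | succ k ih =>
      have h1 : 1 ≤ qden x (k+1) := le_trans ih.1 ih.2
      refine ⟨h1, ?_⟩
      show qden x (k+1) ≤ pquot x (k+2) * qden x (k+1) + qden x k
      nlinarith [pquot_pos hx (k+1), ih.1, ih.2]

lemma qden_real_ge_one {x : ℝ} (hx : Irrational x) (k : ℕ) : (1:ℝ) ≤ (qden x k : ℝ) := by
  exact_mod_cast (qden_ge_one hx k).1

lemma qden_growth {x : ℝ} (hx : Irrational x) :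
    ∀ k, Real.sqrt 2 ^ k ≤ Real.sqrt 2 * (qden x k : ℝ) ∧
      Real.sqrt 2 ^ (k+1) ≤ Real.sqrt 2 * (qden x (k+1) : ℝ) := by
  have hs : (0:ℝ) < Real.sqrt 2 := Real.sqrt_pos.2 (by norm_num)
  have hs1 : (1:ℝ) ≤ Real.sqrt 2 := by
    rw [show (1:ℝ) = Real.sqrt 1 by simp]
    exact Real.sqrt_le_sqrt (by norm_num)
  intro k
  induction k with
  | zero =>
      constructor
      · have : (qden x 0 : ℝ) = 1 := by norm_num [qden]
        rw [this]; nlinarith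
      · have h1 : (1:ℝ) ≤ (qden x 1 : ℝ) := qden_real_ge_one hx 1
        calc Real.sqrt 2 ^ 1 = Real.sqrt 2 := by ring
        _ ≤ Real.sqrt 2 * (qden x 1 : ℝ) := by nlinarith
  | succ k ih =>
      refine ⟨ih.2, ?_⟩
      have hmono : (qden x (k+1) : ℝ) ≥ (qden x k : ℝ) := by exact_mod_cast (qden_ge_one hx k).2
      have hq : (qden x (k+2) : ℝ) ≥ (qden x (k+1) : ℝ) + (qden x k : ℝ) := by
        have := pquot_pos hx (k+1)
        have h1 : 1 ≤ qden x (k+1) := (qden_ge_one hx (k+1)).1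
        have : qden x (k+1) + qden x k ≤ pquot x (k+2) * qden x (k+1) + qden x k := by nlinarith
        have heq : qden x (k+2) = pquot x (k+2) * qden x (k+1) + qden x k := rfl
        rw [heq]; exact_mod_cast this
      have hsq : Real.sqrt 2 ^ 2 = 2 := Real.sq_sqrt (by norm_num)
      have h0 := ih.1
      calc Real.sqrt 2 ^ (k+2) = Real.sqrt 2 ^ 2 * Real.sqrt 2 ^ k := by ring
      _ = 2 * Real.sqrt 2 ^ k := by rw [hsq]
      _ ≤ 2 * (Real.sqrt 2 * (qden x k : ℝ)) := by nlinarith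
      _ = Real.sqrt 2 * ((qden x k : ℝ) + (qden x k : ℝ)) := by ring
      _ ≤ Real.sqrt 2 * ((qden x (k+1) : ℝ) + (qden x k : ℝ)) := by nlinarith
      _ ≤ Real.sqrt 2 * (qden x (k+2) : ℝ) := by nlinarith

lemma inv_qden_le {x : ℝ} (hx : Irrational x) (k : ℕ) :
    ((qden x k : ℝ))⁻¹ ≤ Real.sqrt 2 * (Real.sqrt 2)⁻¹ ^ k := by
  have hs : (0:ℝ) < Real.sqrt 2 := Real.sqrt_pos.2 (by norm_num)
  have hq : (0:ℝ) < (qden x k : ℝ) := lt_of_lt_of_le one_pos (qden_real_ge_one hx k)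
  have h := (qden_growth hx k).1
  have h2 : ((qden x k : ℝ))⁻¹ ≤ Real.sqrt 2 / Real.sqrt 2 ^ k := by
    rw [inv_eq_one_div, div_le_div_iff₀ hq (pow_pos hs k)]
    nlinarith [pow_pos hs k]
  simpa [div_eq_mul_inv, inv_pow] using h2

lemma brjunoTerm_nonneg {x : ℝ} (hx : Irrational x) (k : ℕ) : 0 ≤ brjunoTerm x k := by
  apply div_nonneg
  · apply Real.log_nonneg; exact_mod_cast pquot_pos hx k
  · linarith [qden_real_ge_one hx k]

lemma brjunoTerm_le {x : ℝ} (hx : Irrational x) (k : ℕ) :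
    brjunoTerm x k ≤ (Real.sqrt 2 * (Real.sqrt 2)⁻¹ ^ k) * (-Real.log (gaussIter x k)) := by
  have hg := gaussIter_mem_Ioo hx k
  have hL0 : (0:ℝ) ≤ Real.log (pquot x (k+1)) := by
    apply Real.log_nonneg; exact_mod_cast pquot_pos hx k
  have hfl : ((pquot x (k+1) : ℤ) : ℝ) ≤ (gaussIter x k)⁻¹ := Int.floor_le _
  have hppos : (0:ℝ) < ((pquot x (k+1) : ℤ) : ℝ) := by exact_mod_cast pquot_pos hx k
  have hL : Real.log (pquot x (k+1)) ≤ -Real.log (gaussIter x k) := by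
    rw [← Real.log_inv]
    exact Real.log_le_log hppos hfl
  have hq : (0:ℝ) < (qden x k : ℝ) := lt_of_lt_of_le one_pos (qden_real_ge_one hx k)
  have h2 := inv_qden_le hx k
  calc brjunoTerm x k = Real.log (pquot x (k+1)) * ((qden x k : ℝ))⁻¹ := div_eq_mul_inv _ _
  _ ≤ (-Real.log (gaussIter x k)) * (Real.sqrt 2 * (Real.sqrt 2)⁻¹ ^ k) := by
      apply mul_le_mul hL h2 (by positivity) (by linarith)
  _ = _ := mul_comm _ _

lemma measurable_gaussIter (k : ℕ) : Measurable fun x => gaussIter x k := by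
  induction k with
  | zero => exact measurable_fract
  | succ k ih => exact measurable_fract.comp ih.inv

lemma measurable_pquot_real (k : ℕ) : Measurable fun x => ((pquot x (k+1) : ℤ) : ℝ) := by
  exact measurable_from_top.comp (Int.measurable_floor.comp (measurable_gaussIter k).inv)

lemma measurable_qden_real (k : ℕ) :
    Measurable (fun x => ((qden x k : ℤ) : ℝ)) ∧ Measurable (fun x => ((qden x (k+1) : ℤ) : ℝ)) := by
  induction k with
  | zero =>
      constructor
      · simpa [qden] using measurable_const
      · show Measurable fun x => ((qden x 1 : ℤ) : ℝ)
        have : (fun x => ((qden x 1 : ℤ) : ℝ)) = fun x => ((pquot x 1 : ℤ) : ℝ) := rfl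
        rw [this]; exact measurable_pquot_real 0
  | succ k ih =>
      refine ⟨ih.2, ?_⟩
      have : (fun x => ((qden x (k+2) : ℤ) : ℝ))
          = fun x => ((pquot x (k+2) : ℤ) : ℝ) * ((qden x (k+1) : ℤ) : ℝ) + ((qden x k : ℤ) : ℝ) := by
        funext x
        have heq : qden x (k+2) = pquot x (k+2) * qden x (k+1) + qden x k := rfl
        rw [heq]; push_cast; ring
      rw [this]
      exact ((measurable_pquot_real (k+1)).mul ih.2).add ih.1

lemma measurable_brjunoTerm (k : ℕ) : Measurable fun x => brjunoTerm x k := by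
  exact (Real.measurable_log.comp (measurable_pquot_real k)).div (measurable_qden_real k).1

lemma measurableSet_irrational : MeasurableSet {x : ℝ | Irrational x} := by
  have : {x : ℝ | Irrational x} = (Set.range ((↑) : ℚ → ℝ))ᶜ := by ext x; simp [Irrational]
  rw [this]
  exact (Set.Countable.measurableSet (Set.countable_range _)).compl

lemma measurable_brjuno : Measurable brjuno := by
  unfold brjuno
  exact Measurable.ite measurableSet_irrational
    (Measurable.ennreal_tsum fun k => (measurable_brjunoTerm k).ennreal_ofReal) measurable_const

-- 1-d lintegral change of variables
lemma lintegral_image_eq_lintegral_abs_deriv_mul' {s : Set ℝ} {f f' : ℝ → ℝ}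
    (hs : MeasurableSet s) (hf' : ∀ x ∈ s, HasDerivWithinAt f (f' x) s x)
    (hf : Set.InjOn f s) (g : ℝ → ℝ≥0∞) :
    ∫⁻ x in f '' s, g x = ∫⁻ x in s, ENNReal.ofReal |f' x| * g (f x) := by
  simpa only [ContinuousLinearMap.det_toSpanSingleton] using
    lintegral_image_eq_lintegral_abs_det_fderiv_mul volume hs
      (fun x hx => (hf' x hx).hasFDerivWithinAt) hf g

noncomputable def wfun : ℝ → ℝ≥0∞ := fun y => ENNReal.ofReal (2 / (1 + y))

lemma measurable_wfun : Measurable wfun :=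
  (measurable_const.div ((measurable_const.add measurable_id))).ennreal_ofReal

noncomputable def nu : Measure ℝ := (volume.restrict (Set.Ioo 0 1)).withDensity wfun

lemma nu_apply {A : Set ℝ} (hA : MeasurableSet A) :
    nu A = ∫⁻ y in A ∩ Set.Ioo 0 1, wfun y := by
  rw [nu, withDensity_apply _ hA, Measure.restrict_restrict hA]

lemma hasSum_tele {u : ℝ} (hu : 0 ≤ u) :
    HasSum (fun m : ℕ => 2 / (((m:ℝ)+1+u) * ((m:ℝ)+2+u))) (2/(1+u)) := by
  set f : ℕ → ℝ := fun m => 2 / ((m:ℝ)+1+u) with hf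
  have hpos : ∀ m : ℕ, (0:ℝ) < (m:ℝ)+1+u := fun m => by positivity
  have hterm : ∀ m : ℕ, 2 / (((m:ℝ)+1+u) * ((m:ℝ)+2+u)) = f m - f (m+1) := by
    intro m
    have h1 := hpos m
    have h2 := hpos (m+1)
    rw [hf]
    push_cast
    field_simp
    ring
  rw [hasSum_iff_tendsto_nat_of_nonneg (fun m => by positivity)]
  have hsum : ∀ n : ℕ, ∑ i ∈ Finset.range n, 2 / (((i:ℝ)+1+u) * ((i:ℝ)+2+u)) = f 0 - f n := by
    intro n
    rw [Finset.sum_congr rfl (fun i _ => hterm i), Finset.sum_range_sub']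
  simp only [hsum]
  have h0 : f 0 = 2/(1+u) := by simp [hf]
  rw [h0]
  have : Filter.Tendsto f Filter.atTop (𝓝 0) := by
    rw [hf]
    apply Filter.Tendsto.div_atTop tendsto_const_nhds
    apply Filter.tendsto_atTop_add_const_right
    exact Filter.tendsto_atTop_add_const_right _ _ tendsto_natCast_atTop_atTop
  simpa using tendsto_const_nhds.sub this

lemma tsum_tele_ennreal {u : ℝ} (hu : u ∈ Set.Ioo (0:ℝ) 1) :
    ∑' m : ℕ, ENNReal.ofReal |(-((((m:ℝ)+1+u)^2)⁻¹))| * wfun (((m:ℝ)+1+u)⁻¹) = wfun u := by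
  have hpos : ∀ m : ℕ, (0:ℝ) < (m:ℝ)+1+u := fun m => by nlinarith [hu.1]
  have hterm : ∀ m : ℕ, ENNReal.ofReal |(-((((m:ℝ)+1+u)^2)⁻¹))| * wfun (((m:ℝ)+1+u)⁻¹)
      = ENNReal.ofReal (2 / (((m:ℝ)+1+u) * ((m:ℝ)+2+u))) := by
    intro m
    have h1 := hpos m
    rw [wfun, ← ENNReal.ofReal_mul (by positivity)]
    congr 1
    rw [abs_neg, abs_of_nonneg (by positivity)]
    have ha : ((m:ℝ)+1+u) ≠ 0 := ne_of_gt h1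
    have hb : ((m:ℝ)+2+u) ≠ 0 := by nlinarith
    field_simp
    ring
  simp only [hterm]
  rw [← ENNReal.ofReal_tsum_of_nonneg (fun m => by
      have h1 := hpos m
      have h2 : (0:ℝ) < (m:ℝ)+2+u := by nlinarith
      positivity)
    (hasSum_tele hu.1.le).summable, (hasSum_tele hu.1.le).tsum_eq]
  rfl

def good : Set ℝ := Set.Ioo 0 1 ∩ {x | Irrational x}

lemma measurableSet_good : MeasurableSet good :=
  measurableSet_Ioo.inter measurableSet_irrational

noncomputable def mu : Measure ℝ := volume.restrict good

noncomputable def phi (m : ℕ) (u : ℝ) : ℝ := ((m:ℝ)+1+u)⁻¹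

lemma phi_injective (m : ℕ) : Function.Injective (phi m) := fun a b h => by
  have := inv_injective h
  linarith

lemma measurable_phi (m : ℕ) : Measurable (phi m) :=
  (measurable_const.add measurable_id).inv

lemma measurableEmbedding_phi (m : ℕ) : MeasurableEmbedding (phi m) :=
  (measurable_phi m).measurableEmbedding (phi_injective m)

lemma phi_hasDeriv (m : ℕ) {s : Set ℝ} (hs : s ⊆ Set.Ioo 0 1) :
    ∀ u ∈ s, HasDerivWithinAt (phi m) (-((((m:ℝ)+1+u)^2)⁻¹)) s u := by
  intro u hu
  have h0 : (0:ℝ) < u := (hs hu).1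
  have h : ((m:ℝ)+1+u) ≠ 0 := by positivity
  have hd : HasDerivAt (phi m) (-((((m:ℝ)+1+u)^2)⁻¹)) u := by
    have h2 := (((hasDerivAt_id u).const_add ((m:ℝ)+1)).inv h)
    rw [show phi m = (fun x => (m:ℝ)+1+x)⁻¹ from rfl]
    simpa [neg_div, one_div] using h2
  exact hd.hasDerivWithinAt

lemma phi_image_subset (m : ℕ) {S : Set ℝ} (hS : S ⊆ Set.Ioo 0 1) :
    phi m '' S ⊆ Set.Ioo (0:ℝ) 1 := by
  rintro - ⟨u, hu, rfl⟩
  have h1 := (hS hu).1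
  have h2 : (1:ℝ) < (m:ℝ)+1+u := by nlinarith [Nat.cast_nonneg (α := ℝ) m]
  constructor
  · rw [phi]; positivity
  · rw [phi]
    rw [inv_lt_one_iff₀]; right; exact h2

lemma step_le {κ : Measure ℝ} (hκν : κ ≤ nu) (hgood : κ goodᶜ = 0) :
    Measure.map (fun y : ℝ => Int.fract y⁻¹) κ ≤ nu := by
  have hG : Measurable fun y : ℝ => Int.fract y⁻¹ := measurable_fract.comp measurable_inv
  rw [Measure.le_iff]
  intro A hA
  rw [Measure.map_apply hG hA]
  set S := A ∩ Set.Ioo (0:ℝ) 1 with hSdef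
  have hSm : MeasurableSet S := hA.inter measurableSet_Ioo
  have hSsub : S ⊆ Set.Ioo (0:ℝ) 1 := Set.inter_subset_right
  have hincl : (fun y : ℝ => Int.fract y⁻¹) ⁻¹' A ∩ good ⊆ ⋃ m : ℕ, phi m '' S := by
    rintro y ⟨hyA, hyIoo, hyirr⟩
    have hy0 : (0:ℝ) < y := hyIoo.1
    have hz1 : 1 < y⁻¹ := (one_lt_inv_iff₀).2 ⟨hy0, hyIoo.2⟩
    set z := y⁻¹ with hz
    have hzirr : Irrational z := (hyirr : Irrational y).inv
    have hfr := irrational_fract hzirr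
    set u := Int.fract z with hu
    have hn1 : 1 ≤ ⌊z⌋ := Int.le_floor.2 (by exact_mod_cast hz1.le)
    have hmem : u ∈ S := ⟨hyA, hfr.2⟩
    refine Set.mem_iUnion.2 ⟨(⌊z⌋ - 1).toNat, u, hmem, ?_⟩
    have h' : ((⌊z⌋ - 1).toNat : ℤ) = ⌊z⌋ - 1 := Int.toNat_of_nonneg (by omega)
    have hcast : (((⌊z⌋ - 1).toNat : ℕ) : ℝ) = (⌊z⌋ : ℝ) - 1 := by
      exact_mod_cast congrArg (fun n : ℤ => (n : ℝ)) h'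
    have hphi : phi (⌊z⌋ - 1).toNat u = ((⌊z⌋ : ℝ) + u)⁻¹ := by
      rw [phi, hcast]; ring_nf
    rw [hphi]
    have : (⌊z⌋ : ℝ) + u = z := by
      rw [hu, ← Int.self_sub_floor z]; ring
    rw [this, hz, inv_inv]
  have himgm : ∀ m : ℕ, MeasurableSet (phi m '' S) :=
    fun m => (measurableEmbedding_phi m).measurableSet_image' hSm
  calc κ ((fun y : ℝ => Int.fract y⁻¹) ⁻¹' A)
      ≤ κ (((fun y : ℝ => Int.fract y⁻¹) ⁻¹' A ∩ good) ∪ goodᶜ) := by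
        apply measure_mono
        intro y hy
        by_cases h : y ∈ good
        · exact Or.inl ⟨hy, h⟩
        · exact Or.inr h
    _ ≤ κ ((fun y : ℝ => Int.fract y⁻¹) ⁻¹' A ∩ good) + κ goodᶜ := measure_union_le _ _
    _ = κ ((fun y : ℝ => Int.fract y⁻¹) ⁻¹' A ∩ good) := by rw [hgood, add_zero]
    _ ≤ κ (⋃ m : ℕ, phi m '' S) := measure_mono hincl
    _ ≤ ∑' m : ℕ, κ (phi m '' S) := measure_iUnion_le _
    _ ≤ ∑' m : ℕ, nu (phi m '' S) := ENNReal.tsum_le_tsum fun m => Measure.le_iff'.1 hκν _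
    _ = ∑' m : ℕ, ∫⁻ u in S, ENNReal.ofReal |(-((((m:ℝ)+1+u)^2)⁻¹))| * wfun (phi m u) := by
        refine tsum_congr fun m => ?_
        rw [nu_apply (himgm m), Set.inter_eq_self_of_subset_left (phi_image_subset m hSsub),
          lintegral_image_eq_lintegral_abs_deriv_mul' hSm (phi_hasDeriv m hSsub)
            ((phi_injective m).injOn)]
    _ = ∫⁻ u in S, ∑' m : ℕ, ENNReal.ofReal |(-((((m:ℝ)+1+u)^2)⁻¹))| * wfun (phi m u) := by
        refine (lintegral_tsum fun m => Measurable.aemeasurable ?_).symm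
        apply Measurable.fun_mul
        · apply Measurable.ennreal_ofReal
          apply Measurable.abs
          apply Measurable.neg
          exact ((measurable_const.add measurable_id).pow_const 2).inv
        · exact measurable_wfun.comp (measurable_phi m)
    _ = ∫⁻ u in S, wfun u := by
        refine setLIntegral_congr_fun hSm (fun u hu => ?_)
        exact tsum_tele_ennreal (hSsub hu)
    _ = nu A := (nu_apply hA).symm

lemma one_le_wfun {y : ℝ} (hy : y ∈ Set.Ioo (0:ℝ) 1) : 1 ≤ wfun y := by
  rw [wfun, show (1:ℝ≥0∞) = ENNReal.ofReal 1 by simp]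
  apply ENNReal.ofReal_le_ofReal
  rw [le_div_iff₀ (by nlinarith [hy.1] : (0:ℝ) < 1 + y)]
  nlinarith [hy.2]

lemma wfun_le_two (y : ℝ) (hy : 0 ≤ y) : wfun y ≤ 2 := by
  rw [wfun, show (2:ℝ≥0∞) = ENNReal.ofReal 2 by norm_num]
  apply ENNReal.ofReal_le_ofReal
  rw [div_le_iff₀ (by nlinarith : (0:ℝ) < 1 + y)]
  nlinarith

lemma map_gaussIter_le (k : ℕ) : Measure.map (fun x => gaussIter x k) mu ≤ nu := by
  induction k with
  | zero =>
      rw [Measure.le_iff]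
      intro A hA
      rw [Measure.map_apply (measurable_gaussIter 0) hA, mu,
        Measure.restrict_apply ((measurable_gaussIter 0) hA)]
      have hsub : (fun x => gaussIter x 0) ⁻¹' A ∩ good ⊆ A ∩ Set.Ioo 0 1 := by
        rintro x ⟨hxA, hxIoo, -⟩
        have : gaussIter x 0 = x := Int.fract_eq_self.2 ⟨hxIoo.1.le, hxIoo.2⟩
        rw [Set.mem_preimage, this] at hxA
        exact ⟨hxA, hxIoo⟩
      calc volume ((fun x => gaussIter x 0) ⁻¹' A ∩ good) ≤ volume (A ∩ Set.Ioo 0 1) :=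
            measure_mono hsub
      _ = ∫⁻ _ in A ∩ Set.Ioo (0:ℝ) 1, 1 := (setLIntegral_one _).symm
      _ ≤ ∫⁻ y in A ∩ Set.Ioo (0:ℝ) 1, wfun y :=
            setLIntegral_mono measurable_wfun fun y hy => one_le_wfun hy.2
      _ = nu A := (nu_apply hA).symm
  | succ k ih =>
      have hcomp : (fun x => gaussIter x (k+1))
          = (fun y : ℝ => Int.fract y⁻¹) ∘ (fun x => gaussIter x k) := rfl
      have hG : Measurable fun y : ℝ => Int.fract y⁻¹ := measurable_fract.comp measurable_inv
      rw [hcomp, ← Measure.map_map hG (measurable_gaussIter k)]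
      apply step_le ih
      rw [Measure.map_apply (measurable_gaussIter k) measurableSet_good.compl, mu,
        Measure.restrict_apply ((measurable_gaussIter k) measurableSet_good.compl)]
      have : (fun x => gaussIter x k) ⁻¹' goodᶜ ∩ good = ∅ := by
        ext x
        simp only [Set.mem_inter_iff, Set.mem_preimage, Set.mem_compl_iff, Set.mem_empty_iff_false,
          iff_false, not_and]
        intro hxbad hxg
        exact hxbad ⟨gaussIter_mem_Ioo hxg.2 k, gaussIter_irrational hxg.2 k⟩
      rw [this, measure_empty]

lemma lintegral_comp_le (k : ℕ) {g : ℝ → ℝ≥0∞} (hg : Measurable g) :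
    ∫⁻ x, g (gaussIter x k) ∂mu ≤ ∫⁻ y in Set.Ioo (0:ℝ) 1, wfun y * g y := by
  rw [← lintegral_map hg (measurable_gaussIter k)]
  refine le_trans (lintegral_mono' (map_gaussIter_le k) le_rfl) ?_
  rw [nu, lintegral_withDensity_eq_lintegral_mul _ measurable_wfun hg]
  exact le_of_eq rfl

noncomputable def Jint : ℝ≥0∞ := ∫⁻ y in Set.Ioo (0:ℝ) 1, ENNReal.ofReal (-Real.log y)

lemma neg_log_le {y : ℝ} (hy : y ∈ Set.Ioo (0:ℝ) 1) : -Real.log y ≤ 2 * (Real.sqrt y)⁻¹ := by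
  have hy0 := hy.1
  have h1 : -Real.log y = Real.log y⁻¹ := (Real.log_inv y).symm
  have h2 : Real.log y⁻¹ = 2 * Real.log (Real.sqrt y⁻¹) := by
    rw [Real.log_sqrt (by positivity)]; ring
  have h3 : Real.log (Real.sqrt y⁻¹) ≤ Real.sqrt y⁻¹ - 1 :=
    Real.log_le_sub_one_of_pos (Real.sqrt_pos.2 (by positivity))
  have h4 : Real.sqrt y⁻¹ = (Real.sqrt y)⁻¹ := Real.sqrt_inv y
  rw [h1, h2, ← h4]
  nlinarith [Real.sqrt_nonneg y⁻¹]

lemma Jint_lt_top : Jint < ⊤ := by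
  have hInt : IntegrableOn (fun y : ℝ => y ^ (-(1/2) : ℝ)) (Set.Ioo 0 1) :=
    (intervalIntegral.integrableOn_Ioo_rpow_iff zero_lt_one).2 (by norm_num)
  have hInt2 : IntegrableOn (fun y : ℝ => 2 * y ^ (-(1/2) : ℝ)) (Set.Ioo 0 1) :=
    hInt.const_mul 2
  have hle : Jint ≤ ∫⁻ y in Set.Ioo (0:ℝ) 1, ENNReal.ofReal (2 * y ^ (-(1/2) : ℝ)) := by
    refine setLIntegral_mono' measurableSet_Ioo fun y hy => ?_
    apply ENNReal.ofReal_le_ofReal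
    have h1 := neg_log_le hy
    have h2 : y ^ (-(1/2) : ℝ) = (Real.sqrt y)⁻¹ := by
      rw [Real.rpow_neg hy.1.le, ← Real.sqrt_eq_rpow]
    rw [h2]; linarith
  exact lt_of_le_of_lt hle hInt2.lintegral_lt_top


lemma measurable_neg_log_ofReal : Measurable fun y : ℝ => ENNReal.ofReal (-Real.log y) :=
  Real.measurable_log.neg.ennreal_ofReal

lemma term_integral_le (k : ℕ) :
    ∫⁻ x, ENNReal.ofReal (brjunoTerm x k) ∂mu
      ≤ ENNReal.ofReal (Real.sqrt 2 * (Real.sqrt 2)⁻¹ ^ k) * (2 * Jint) := by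
  have hc : (0:ℝ) ≤ Real.sqrt 2 * (Real.sqrt 2)⁻¹ ^ k := by positivity
  have h1 : ∫⁻ x, ENNReal.ofReal (brjunoTerm x k) ∂mu
      ≤ ∫⁻ x, ENNReal.ofReal (Real.sqrt 2 * (Real.sqrt 2)⁻¹ ^ k)
          * ENNReal.ofReal (-Real.log (gaussIter x k)) ∂mu := by
    rw [mu]
    refine setLIntegral_mono' measurableSet_good fun x hx => ?_
    rw [← ENNReal.ofReal_mul hc]
    exact ENNReal.ofReal_le_ofReal (brjunoTerm_le hx.2 k)
  rw [lintegral_const_mul _ (show Measurable fun x : ℝ => ENNReal.ofReal (-Real.log (gaussIter x k))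
    from measurable_neg_log_ofReal.comp (measurable_gaussIter k))] at h1
  refine le_trans h1 ?_
  apply mul_le_mul_right ?_
  calc ∫⁻ x, ENNReal.ofReal (-Real.log (gaussIter x k)) ∂mu
      ≤ ∫⁻ y in Set.Ioo (0:ℝ) 1, wfun y * ENNReal.ofReal (-Real.log y) :=
        lintegral_comp_le k measurable_neg_log_ofReal
    _ ≤ ∫⁻ y in Set.Ioo (0:ℝ) 1, 2 * ENNReal.ofReal (-Real.log y) := by
        refine setLIntegral_mono' measurableSet_Ioo fun y hy => ?_
        exact mul_le_mul_left (wfun_le_two y hy.1.le) _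
    _ = 2 * Jint := by rw [Jint, lintegral_const_mul _ measurable_neg_log_ofReal]

lemma lintegral_brjuno_lt_top : ∫⁻ x, brjuno x ∂mu < ⊤ := by
  have h1 : ∫⁻ x, brjuno x ∂mu = ∫⁻ x, ∑' k, ENNReal.ofReal (brjunoTerm x k) ∂mu := by
    rw [mu]
    refine setLIntegral_congr_fun measurableSet_good
      (fun x hx => ?_)
    rw [brjuno]
    exact if_pos (hx.2 : Irrational x)
  rw [h1, lintegral_tsum fun k => ((measurable_brjunoTerm k).ennreal_ofReal).aemeasurable]
  have h2 : ∑' k, ∫⁻ x, ENNReal.ofReal (brjunoTerm x k) ∂mu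
      ≤ ∑' k : ℕ, ENNReal.ofReal (Real.sqrt 2 * (Real.sqrt 2)⁻¹ ^ k) * (2 * Jint) :=
    ENNReal.tsum_le_tsum term_integral_le
  refine lt_of_le_of_lt h2 ?_
  rw [ENNReal.tsum_mul_right]
  have hr1 : (Real.sqrt 2)⁻¹ < 1 := by
    rw [inv_lt_one_iff₀]
    right
    have : (1:ℝ) < 2 := one_lt_two
    nlinarith [Real.sq_sqrt (by norm_num : (0:ℝ) ≤ 2), Real.sqrt_nonneg 2,
      Real.sqrt_le_sqrt (by norm_num : (1:ℝ) ≤ 2), Real.sqrt_one]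
  have hr0 : (0:ℝ) ≤ (Real.sqrt 2)⁻¹ := by positivity
  have hsumm : Summable fun k : ℕ => Real.sqrt 2 * (Real.sqrt 2)⁻¹ ^ k :=
    (summable_geometric_of_lt_one hr0 hr1).mul_left _
  rw [← ENNReal.ofReal_tsum_of_nonneg (fun k => by positivity) hsumm]
  exact ENNReal.mul_lt_top ENNReal.ofReal_lt_top
    (ENNReal.mul_lt_top (by norm_num) Jint_lt_top)

lemma gaussIter_add_int (x : ℝ) (n : ℤ) (k : ℕ) : gaussIter (x + n) k = gaussIter x k := by
  induction k with
  | zero => exact Int.fract_add_intCast x n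
  | succ k ih => show Int.fract (gaussIter (x + n) k)⁻¹ = _; rw [ih]; rfl

lemma pquot_add_int (x : ℝ) (n : ℤ) (k : ℕ) : pquot (x + n) (k + 1) = pquot x (k + 1) := by
  show ⌊(gaussIter (x + n) k)⁻¹⌋ = ⌊(gaussIter x k)⁻¹⌋
  rw [gaussIter_add_int]

lemma qden_add_int (x : ℝ) (n : ℤ) :
    ∀ k, qden (x + n) k = qden x k ∧ qden (x + n) (k+1) = qden x (k+1) := by
  intro k
  induction k with
  | zero =>
      exact ⟨rfl, pquot_add_int x n 0⟩
  | succ k ih =>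
      refine ⟨ih.2, ?_⟩
      show pquot (x+n) (k+2) * qden (x+n) (k+1) + qden (x+n) k
        = pquot x (k+2) * qden x (k+1) + qden x k
      rw [pquot_add_int, ih.1, ih.2]

lemma brjunoTerm_add_int (x : ℝ) (n : ℤ) (k : ℕ) : brjunoTerm (x + n) k = brjunoTerm x k := by
  rw [brjunoTerm, brjunoTerm, pquot_add_int, (qden_add_int x n k).1]

lemma brjuno_add_int (x : ℝ) (n : ℤ) : brjuno (x + n) = brjuno x := by
  by_cases h : Irrational x
  · rw [brjuno, brjuno, if_pos (h.add_intCast n), if_pos h]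
    exact tsum_congr fun k => by rw [brjunoTerm_add_int]
  · rw [brjuno, brjuno, if_neg (fun hc => h (Irrational.of_add_intCast n hc)), if_neg h]

lemma volume_bad_Icc : volume ({x : ℝ | brjuno x = ⊤} ∩ Set.Icc 0 1) = 0 := by
  have hmeas : MeasurableSet {x : ℝ | brjuno x = ⊤} :=
    measurable_brjuno (measurableSet_singleton ⊤)
  have h1 : mu {x : ℝ | brjuno x = ⊤} = 0 := by
    have := ae_lt_top measurable_brjuno lintegral_brjuno_lt_top.ne
    rwa [MeasureTheory.ae_iff, show {x : ℝ | ¬ brjuno x < ⊤} = {x : ℝ | brjuno x = ⊤} by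
      ext x; simp [lt_top_iff_ne_top]] at this
  have h2 : volume ({x : ℝ | brjuno x = ⊤} ∩ good) = 0 := by
    rw [mu, Measure.restrict_apply hmeas] at h1
    exact h1
  have hsub : {x : ℝ | brjuno x = ⊤} ∩ Set.Icc 0 1
      ⊆ ({x : ℝ | brjuno x = ⊤} ∩ good) ∪ ({(0:ℝ), 1} ∪ {x : ℝ | ¬ Irrational x}) := by
    rintro x ⟨hx, hx0, hx1⟩
    by_cases hirr : Irrational x
    · rcases eq_or_lt_of_le hx0 with h | h
      · exact Or.inr (Or.inl (Or.inl h.symm))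
      rcases eq_or_lt_of_le hx1 with h' | h'
      · exact Or.inr (Or.inl (Or.inr h'))
      · exact Or.inl ⟨hx, ⟨h, h'⟩, hirr⟩
    · exact Or.inr (Or.inr hirr)
  refine le_antisymm (le_trans (measure_mono hsub) ?_) (zero_le)
  refine le_trans (measure_union_le _ _) ?_
  rw [h2, zero_add]
  refine le_trans (measure_union_le _ _) ?_
  have hr : volume {x : ℝ | ¬ Irrational x} = 0 := by
    have : {x : ℝ | ¬ Irrational x} = Set.range ((↑) : ℚ → ℝ) := by
      ext x; simp [Irrational]
    rw [this]
    exact (Set.countable_range _).measure_zero _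
  have hp : volume ({(0:ℝ), 1} : Set ℝ) = 0 :=
    Set.Countable.measure_zero (by simp) _
  rw [hr, hp, zero_add]

lemma volume_bad : volume {x : ℝ | brjuno x = ⊤} = 0 := by
  have hcover : {x : ℝ | brjuno x = ⊤}
      ⊆ ⋃ n : ℤ, ({x : ℝ | brjuno x = ⊤} ∩ Set.Ico (n : ℝ) (n+1)) := by
    intro x hx
    exact Set.mem_iUnion.2 ⟨⌊x⌋, hx, Int.floor_le x, Int.lt_floor_add_one x⟩
  refine le_antisymm (le_trans (measure_mono hcover) ?_) (zero_le)
  refine le_trans (measure_iUnion_le _) ?_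
  have hzero : ∀ n : ℤ, volume ({x : ℝ | brjuno x = ⊤} ∩ Set.Ico (n : ℝ) (n+1)) = 0 := by
    intro n
    have hsub : {x : ℝ | brjuno x = ⊤} ∩ Set.Ico (n : ℝ) (n+1)
        ⊆ (fun x : ℝ => x + (-n : ℤ)) ⁻¹' ({x : ℝ | brjuno x = ⊤} ∩ Set.Icc 0 1) := by
      rintro x ⟨hx, hxl, hxr⟩
      constructor
      · show brjuno (x + ((-n : ℤ) : ℝ)) = ⊤
        rw [brjuno_add_int]; exact hx
      · constructor
        · push_cast; linarith
        · push_cast; linarith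
    refine le_antisymm (le_trans (measure_mono hsub) ?_) (zero_le)
    have : volume ((fun x : ℝ => x + ((-n : ℤ) : ℝ)) ⁻¹' ({x : ℝ | brjuno x = ⊤} ∩ Set.Icc 0 1))
        = volume ({x : ℝ | brjuno x = ⊤} ∩ Set.Icc 0 1) :=
      measure_preimage_add_right volume _ _
    rw [this, volume_bad_Icc]
  simp [hzero]

/-- the superlevel sets of the Brjuno function in `[0,1]` have small
Lebesgue measure for large `M`; in particular `B` is finite almost everywhere. -/
theorem statement10 :
    (∀ ε : ℝ, 0 < ε → ∃ M : ℝ, 0 < M ∧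
      MeasureTheory.volume {x : ℝ | x ∈ Set.Icc (0 : ℝ) 1 ∧ ENNReal.ofReal M < brjuno x}
        < ENNReal.ofReal ε) ∧
    (∀ᵐ x : ℝ, brjuno x ≠ ⊤) := by
  constructor
  · intro ε hε
    set T := ∫⁻ x, brjuno x ∂mu with hT
    set M : ℝ := max 1 ((T.toReal + 1) / ε) with hM
    have hM0 : (0:ℝ) < M := lt_of_lt_of_le one_pos (le_max_left _ _)
    refine ⟨M, hM0, ?_⟩
    have hT_ne : T ≠ ⊤ := lintegral_brjuno_lt_top.ne
    have hMε : T < ENNReal.ofReal M * ENNReal.ofReal ε := by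
      have h1 : T.toReal + 1 ≤ M * ε := by
        have h2 : (T.toReal + 1) / ε ≤ M := le_max_right _ _
        rw [div_le_iff₀ hε] at h2
        linarith
      calc T ≤ ENNReal.ofReal T.toReal := le_of_eq (ENNReal.ofReal_toReal hT_ne).symm
      _ < ENNReal.ofReal (T.toReal + 1) := by
          rw [ENNReal.ofReal_lt_ofReal_iff (by positivity)]
          linarith
      _ ≤ ENNReal.ofReal (M * ε) := ENNReal.ofReal_le_ofReal h1
      _ = ENNReal.ofReal M * ENNReal.ofReal ε := ENNReal.ofReal_mul hM0.le
    have hAmeas : MeasurableSet {x : ℝ | ENNReal.ofReal M ≤ brjuno x} :=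
      measurable_brjuno measurableSet_Ici
    have hcheb : ENNReal.ofReal M * mu {x : ℝ | ENNReal.ofReal M ≤ brjuno x} ≤ T :=
      mul_meas_ge_le_lintegral₀ measurable_brjuno.aemeasurable _
    have hmu_lt : mu {x : ℝ | ENNReal.ofReal M ≤ brjuno x} < ENNReal.ofReal ε := by
      by_contra hcon
      push_neg at hcon
      exact absurd (le_trans (mul_le_mul_right hcon _) hcheb) (not_le.2 hMε)
    have hsub : {x : ℝ | x ∈ Set.Icc (0:ℝ) 1 ∧ ENNReal.ofReal M < brjuno x}
        ⊆ ({x : ℝ | ENNReal.ofReal M ≤ brjuno x} ∩ good)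
          ∪ ({(0:ℝ), 1} ∪ {x : ℝ | ¬ Irrational x}) := by
      rintro x ⟨⟨hx0, hx1⟩, hxM⟩
      by_cases hirr : Irrational x
      · rcases eq_or_lt_of_le hx0 with h | h
        · exact Or.inr (Or.inl (Or.inl h.symm))
        rcases eq_or_lt_of_le hx1 with h' | h'
        · exact Or.inr (Or.inl (Or.inr h'))
        · exact Or.inl ⟨hxM.le, ⟨h, h'⟩, hirr⟩
      · exact Or.inr (Or.inr hirr)
    have hr : volume {x : ℝ | ¬ Irrational x} = 0 := by
      have : {x : ℝ | ¬ Irrational x} = Set.range ((↑) : ℚ → ℝ) := by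
        ext x; simp [Irrational]
      rw [this]
      exact (Set.countable_range _).measure_zero _
    have hp : volume ({(0:ℝ), 1} : Set ℝ) = 0 := Set.Countable.measure_zero (by simp) _
    have hmain : volume ({x : ℝ | ENNReal.ofReal M ≤ brjuno x} ∩ good)
        = mu {x : ℝ | ENNReal.ofReal M ≤ brjuno x} := by
      rw [mu, Measure.restrict_apply hAmeas]
    calc volume {x : ℝ | x ∈ Set.Icc (0:ℝ) 1 ∧ ENNReal.ofReal M < brjuno x}
        ≤ volume (({x : ℝ | ENNReal.ofReal M ≤ brjuno x} ∩ good)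
          ∪ ({(0:ℝ), 1} ∪ {x : ℝ | ¬ Irrational x})) := measure_mono hsub
      _ ≤ volume ({x : ℝ | ENNReal.ofReal M ≤ brjuno x} ∩ good)
          + volume ({(0:ℝ), 1} ∪ {x : ℝ | ¬ Irrational x}) := measure_union_le _ _
      _ ≤ volume ({x : ℝ | ENNReal.ofReal M ≤ brjuno x} ∩ good)
          + (volume ({(0:ℝ), 1} : Set ℝ) + volume {x : ℝ | ¬ Irrational x}) :=
            add_le_add_right (measure_union_le _ _) _
      _ = mu {x : ℝ | ENNReal.ofReal M ≤ brjuno x} := by rw [hmain, hr, hp]; simp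
      _ < ENNReal.ofReal ε := hmu_lt
  · rw [MeasureTheory.ae_iff]
    have : {x : ℝ | ¬ brjuno x ≠ ⊤} = {x : ℝ | brjuno x = ⊤} := by
      ext x; simp
    rw [this]
    exact volume_bad
end
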